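/- arXiv:math/0603529 — 5 statements merged into one kernel-verified Lean document; each statement's English description precedes it below -/
import Mathlib

section
/- For m ≥ 2 fixed and k = ⌊x√n⌋ with x > 0 fixed, the quantity (k/(n-k))·m^k·(m-1)·C(nm-k-1, n-k-1)/C(nm, n) is asymptotic to ((m-1)/m)·x·exp(-(m-1)x²/(2m))·(1/√n) as n → ∞. -/
open Filter Finset Nat
lemma aux_log_bound {t : ℝ} (h0 : 0 ≤ t) (h1 : t ≤ 1/2) :
    |Real.log (1 - t) + t| ≤ 2 * t ^ 2 := by
  have ht : (0:ℝ) < 1 - t := by linarith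
  have hup : Real.log (1 - t) ≤ -t := by
    have := Real.log_le_sub_one_of_pos ht
    linarith
  have hs : (0:ℝ) < 1 + (t + 2*t^2) := by nlinarith
  have hexp : Real.exp (-(t + 2*t^2)) ≤ 1 - t := by
    have h2 : 1 + (t + 2*t^2) ≤ Real.exp (t + 2*t^2) := by
      have := Real.add_one_le_exp (t + 2*t^2); linarith
    have h3 : Real.exp (-(t + 2*t^2)) ≤ (1 + (t + 2*t^2))⁻¹ := by
      rw [Real.exp_neg]
      exact inv_anti₀ hs h2
    have h4 : (1 + (t + 2*t^2))⁻¹ ≤ 1 - t := by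
      rw [inv_le_iff_one_le_mul₀ hs]
      nlinarith
    linarith
  have hlow : -(t + 2*t^2) ≤ Real.log (1 - t) := by
    calc -(t + 2*t^2) = Real.log (Real.exp (-(t + 2*t^2))) := (Real.log_exp _).symm
    _ ≤ Real.log (1 - t) := Real.log_le_log (Real.exp_pos _) hexp
  rw [abs_le]
  constructor <;> nlinarith

lemma aux_choose_ratio (m n K : ℕ) (hm : 1 ≤ m) (hK : K + 1 ≤ n) :
    ((n * m - K - 1).choose (n - K - 1) : ℝ) / ((n * m).choose n : ℝ)
      = (n.descFactorial (K + 1) : ℝ) / ((n * m).descFactorial (K + 1) : ℝ) := by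
  have hnm : n ≤ n * m := Nat.le_mul_of_pos_right n (by omega)
  have e1 : (n*m - K - 1).choose (n - K - 1) * (n - K - 1) ! * (n*m - n) ! = (n*m - K - 1) ! := by
    have h : n - K - 1 ≤ n*m - K - 1 := by omega
    have := Nat.choose_mul_factorial_mul_factorial h
    rwa [show n*m - K - 1 - (n - K - 1) = n*m - n by omega] at this
  have e2 : (n*m).choose n * n ! * (n*m - n) ! = (n*m) ! := Nat.choose_mul_factorial_mul_factorial hnm
  have e3 : (n - K - 1) ! * n.descFactorial (K+1) = n ! := by
    have := Nat.factorial_mul_descFactorial (show K+1 ≤ n from hK)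
    rwa [show n - (K+1) = n - K - 1 by omega] at this
  have e4 : (n*m - K - 1) ! * (n*m).descFactorial (K+1) = (n*m) ! := by
    have := Nat.factorial_mul_descFactorial (show K+1 ≤ n*m by omega)
    rwa [show n*m - (K+1) = n*m - K - 1 by omega] at this
  have key : (n*m - K - 1).choose (n - K - 1) * (n*m).descFactorial (K+1)
      = (n*m).choose n * n.descFactorial (K+1) := by
    apply Nat.eq_of_mul_eq_mul_right (Nat.mul_pos (Nat.factorial_pos (n - K - 1))
      (Nat.factorial_pos (n*m - n)))
    calc (n*m - K - 1).choose (n - K - 1) * (n*m).descFactorial (K+1) * ((n - K - 1) ! * (n*m - n) !)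
        = ((n*m - K - 1).choose (n - K - 1) * (n - K - 1) ! * (n*m - n) !) * (n*m).descFactorial (K+1) := by ring
      _ = (n*m - K - 1) ! * (n*m).descFactorial (K+1) := by rw [e1]
      _ = (n*m) ! := e4
      _ = (n*m).choose n * n ! * (n*m - n) ! := e2.symm
      _ = (n*m).choose n * ((n - K - 1) ! * n.descFactorial (K+1)) * (n*m - n) ! := by rw [e3]
      _ = (n*m).choose n * n.descFactorial (K+1) * ((n - K - 1) ! * (n*m - n) !) := by ring
  have hC2 : (0:ℝ) < ((n*m).choose n : ℝ) := by exact_mod_cast Nat.choose_pos hnm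
  have hD2 : (0:ℝ) < ((n*m).descFactorial (K+1) : ℝ) := by
    have h0 : (n*m).descFactorial (K+1) ≠ 0 := by
      rw [Ne, Nat.descFactorial_eq_zero_iff_lt]
      omega
    exact_mod_cast Nat.pos_of_ne_zero h0
  rw [div_eq_div_iff hC2.ne' hD2.ne']
  exact_mod_cast key.trans (Nat.mul_comm _ _)

lemma aux_sqrt_atTop : Tendsto (fun n : ℕ => Real.sqrt n) atTop atTop := by
  rw [tendsto_atTop_atTop]
  intro b
  refine ⟨⌈b*b⌉₊, fun n hn => ?_⟩
  rcases le_or_gt b 0 with h | h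
  · exact h.trans (Real.sqrt_nonneg _)
  · have hb : b*b ≤ (n:ℝ) := le_trans (Nat.le_ceil _) (by exact_mod_cast hn)
    calc b = Real.sqrt (b*b) := (Real.sqrt_mul_self h.le).symm
    _ ≤ _ := Real.sqrt_le_sqrt hb

set_option maxHeartbeats 1000000 in
/-- For `m ≥ 2` fixed and `k = ⌊x √n⌋` with `x > 0` fixed, the quantity
`(k/(n-k)) m^k (m-1) C(nm-k-1, n-k-1) / C(nm, n)` is asymptotic to
`((m-1)/m) x exp(-(m-1)x²/(2m)) / √n` as `n → ∞`. -/
theorem stmt6 (m : ℕ) (hm : 2 ≤ m) (x : ℝ) (hx : 0 < x) :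
    Tendsto (fun n : ℕ =>
        ((fun k : ℕ =>
          ((k : ℝ) / ((n : ℝ) - k) * (m : ℝ) ^ k * ((m : ℝ) - 1) *
              ((n * m - k - 1).choose (n - k - 1) : ℝ) / ((n * m).choose n : ℝ)) /
            (((m : ℝ) - 1) / m * x *
              Real.exp (-(((m : ℝ) - 1) * x ^ 2) / (2 * m)) / Real.sqrt n))) ⌊x * Real.sqrt n⌋₊)
      atTop (nhds 1) := by
  have hm2 : (2:ℝ) ≤ (m:ℝ) := by exact_mod_cast hm
  have hmpos : (0:ℝ) < m := by linarith
  have hxne : x ≠ 0 := hx.ne'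
  set Ec := Real.exp (-(((m:ℝ) - 1) * x ^ 2) / (2 * m)) with hEc
  have hEcpos : 0 < Ec := Real.exp_pos _
  set S : ℕ → ℝ := fun n => ∑ j ∈ Finset.range (⌊x * Real.sqrt n⌋₊ + 1),
      (Real.log (1 - (j:ℝ)/n) - Real.log (1 - (j:ℝ)/((n:ℝ)*(m:ℝ)))) with hS
  set T : ℕ → ℝ := fun n => ∑ j ∈ Finset.range (⌊x * Real.sqrt n⌋₊ + 1),
      ((Real.log (1 - (j:ℝ)/n) + (j:ℝ)/n)
        - (Real.log (1 - (j:ℝ)/((n:ℝ)*(m:ℝ))) + (j:ℝ)/((n:ℝ)*(m:ℝ)))) with hT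
  have hxs : Tendsto (fun n : ℕ => x * Real.sqrt n) atTop atTop :=
    aux_sqrt_atTop.const_mul_atTop hx
  have h1 : Tendsto (fun n : ℕ => (⌊x * Real.sqrt n⌋₊ : ℝ) / (x * Real.sqrt n)) atTop (nhds 1) :=
    tendsto_nat_floor_div_atTop.comp hxs
  have hinv : Tendsto (fun n : ℕ => (Real.sqrt n)⁻¹) atTop (nhds 0) :=
    tendsto_inv_atTop_zero.comp aux_sqrt_atTop
  have h2 : Tendsto (fun n : ℕ => (⌊x * Real.sqrt n⌋₊ : ℝ) / Real.sqrt n) atTop (nhds x) := by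
    have h := h1.mul_const x
    rw [one_mul] at h
    refine h.congr fun n => ?_
    rcases eq_or_ne (Real.sqrt n) 0 with hs | hs
    · simp [hs]
    · field_simp
  have h3 : Tendsto (fun n : ℕ => (⌊x * Real.sqrt n⌋₊ : ℝ) / n) atTop (nhds 0) := by
    have h := h2.mul hinv
    rw [mul_zero] at h
    refine h.congr fun n => ?_
    rw [← div_eq_mul_inv, div_div, Real.mul_self_sqrt (Nat.cast_nonneg n)]
  have h4 : Tendsto (fun n : ℕ => ((⌊x * Real.sqrt n⌋₊ : ℝ) + 1) / Real.sqrt n) atTop (nhds x) := by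
    have h := h2.add hinv
    rw [add_zero] at h
    refine h.congr fun n => ?_
    rw [← one_div, ← add_div]
  have h5 : Tendsto (fun n : ℕ =>
      (⌊x * Real.sqrt n⌋₊ : ℝ) * ((⌊x * Real.sqrt n⌋₊ : ℝ) + 1) / n) atTop (nhds (x*x)) := by
    have h := h2.mul h4
    refine h.congr fun n => ?_
    have hss : Real.sqrt n * Real.sqrt n = (n:ℝ) := Real.mul_self_sqrt (Nat.cast_nonneg n)
    rw [show (⌊x * Real.sqrt n⌋₊:ℝ) / Real.sqrt n * (((⌊x * Real.sqrt n⌋₊:ℝ) + 1) / Real.sqrt n)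
        = (⌊x * Real.sqrt n⌋₊:ℝ) * ((⌊x * Real.sqrt n⌋₊:ℝ) + 1) / (Real.sqrt n * Real.sqrt n) from by ring, hss]
  have h6 : Tendsto (fun n : ℕ =>
      (⌊x * Real.sqrt n⌋₊ : ℝ)^2 * ((⌊x * Real.sqrt n⌋₊ : ℝ) + 1) / (n:ℝ)^2) atTop (nhds 0) := by
    have h := (h2.mul h5).mul hinv
    rw [mul_zero] at h
    refine h.congr fun n => ?_
    have hss : Real.sqrt n * Real.sqrt n = (n:ℝ) := Real.mul_self_sqrt (Nat.cast_nonneg n)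
    rw [show (⌊x * Real.sqrt n⌋₊:ℝ) / Real.sqrt n
          * ((⌊x * Real.sqrt n⌋₊:ℝ) * ((⌊x * Real.sqrt n⌋₊:ℝ) + 1) / n) * (Real.sqrt n)⁻¹
        = (⌊x * Real.sqrt n⌋₊:ℝ)^2 * ((⌊x * Real.sqrt n⌋₊:ℝ) + 1)
          / (Real.sqrt n * Real.sqrt n * ((n:ℝ))) from by ring, hss]
    ring
  have hev : ∀ᶠ n : ℕ in atTop, 2 * (⌊x * Real.sqrt n⌋₊ + 1) ≤ n := by
    have hg : Tendsto (fun n : ℕ =>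
        2*((⌊x * Real.sqrt n⌋₊:ℝ)/n) + 2*(1/(n:ℝ))) atTop (nhds 0) := by
      have := (h3.const_mul 2).add (tendsto_one_div_atTop_nhds_zero_nat.const_mul 2)
      simpa using this
    filter_upwards [hg.eventually_lt_const one_pos, eventually_ge_atTop 1] with n hn hn1
    have hn0 : (0:ℝ) < n := by exact_mod_cast hn1
    have heq : 2*((⌊x * Real.sqrt n⌋₊:ℝ)/n) + 2*(1/(n:ℝ))
        = (2*(⌊x * Real.sqrt n⌋₊:ℝ) + 2)/n := by ring
    rw [heq, div_lt_one hn0] at hn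
    have : (2*(⌊x * Real.sqrt n⌋₊ + 1) : ℝ) ≤ n := by push_cast; linarith
    exact_mod_cast this
  have hgauss : ∀ K : ℕ, (∑ j ∈ Finset.range (K+1), (j:ℝ)) = K*(K+1)/2 := by
    intro K
    have h : (∑ i ∈ Finset.range (K+1), i) * 2 = (K+1)*K := by
      simpa using Finset.sum_range_id_mul_two (K+1)
    have h2 := congrArg (Nat.cast : ℕ → ℝ) h
    push_cast at h2
    linarith
  have hS_eq : ∀ n : ℕ, S n = T n
      - (1 - 1/(m:ℝ)) * ((⌊x * Real.sqrt n⌋₊:ℝ) * ((⌊x * Real.sqrt n⌋₊:ℝ)+1)/2) / n := by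
    intro n
    have hsub : ∑ j ∈ Finset.range (⌊x * Real.sqrt n⌋₊+1), ((j:ℝ)/n - (j:ℝ)/((n:ℝ)*(m:ℝ)))
        = (1 - 1/(m:ℝ)) * ((⌊x * Real.sqrt n⌋₊:ℝ) * ((⌊x * Real.sqrt n⌋₊:ℝ)+1)/2) / n := by
      have hc : ∀ j ∈ Finset.range (⌊x * Real.sqrt n⌋₊+1),
          ((j:ℝ)/n - (j:ℝ)/((n:ℝ)*(m:ℝ))) = (j:ℝ) * ((1:ℝ)/n - 1/((n:ℝ)*(m:ℝ))) :=
        fun j _ => by ring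
      rw [Finset.sum_congr rfl hc, ← Finset.sum_mul, hgauss]
      rcases eq_or_ne ((n:ℝ)) 0 with h0 | h0
      · simp [h0]
      · field_simp
    simp only [hS, hT]
    rw [← hsub, ← Finset.sum_sub_distrib]
    exact Finset.sum_congr rfl fun j _ => by ring
  have hmain : Tendsto (fun n : ℕ =>
      (1 - 1/(m:ℝ)) * ((⌊x * Real.sqrt n⌋₊:ℝ) * ((⌊x * Real.sqrt n⌋₊:ℝ)+1)/2) / n)
      atTop (nhds ((1 - 1/(m:ℝ)) * (x*x) / 2)) := by
    have h := h5.const_mul ((1 - 1/(m:ℝ))/2)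
    rw [show (1 - 1/(m:ℝ)) * (x*x) / 2 = ((1 - 1/(m:ℝ))/2) * (x*x) by ring]
    exact h.congr fun n => by ring
  have hEbound : ∀ᶠ n : ℕ in atTop, ‖T n‖
      ≤ 4 * ((⌊x * Real.sqrt n⌋₊:ℝ)^2 * ((⌊x * Real.sqrt n⌋₊:ℝ)+1) / (n:ℝ)^2) := by
    filter_upwards [hev, eventually_ge_atTop 1] with n hn2 hn1
    have hn0 : (0:ℝ) < n := by exact_mod_cast hn1
    have hKn : (⌊x * Real.sqrt n⌋₊:ℝ)/n ≤ 1/2 := by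
      have h2k : (2*(⌊x * Real.sqrt n⌋₊:ℝ)) ≤ n := by exact_mod_cast (by omega : 2*⌊x * Real.sqrt n⌋₊ ≤ n)
      rw [div_le_div_iff₀ hn0 (by norm_num : (0:ℝ) < 2)]; linarith
    have hterm : ∀ j ∈ Finset.range (⌊x * Real.sqrt n⌋₊+1),
        |(Real.log (1 - (j:ℝ)/n) + (j:ℝ)/n)
          - (Real.log (1 - (j:ℝ)/((n:ℝ)*(m:ℝ))) + (j:ℝ)/((n:ℝ)*(m:ℝ)))|
        ≤ 4*((⌊x * Real.sqrt n⌋₊:ℝ)/n)^2 := by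
      intro j hj
      have hj' : j ≤ ⌊x * Real.sqrt n⌋₊ := by
        have := Finset.mem_range.1 hj; omega
      have hj'' : (j:ℝ) ≤ (⌊x * Real.sqrt n⌋₊:ℝ) := by exact_mod_cast hj'
      have hja : 0 ≤ (j:ℝ)/n := by positivity
      have hjb : (j:ℝ)/n ≤ (⌊x * Real.sqrt n⌋₊:ℝ)/n := by gcongr
      have hjc : 0 ≤ (j:ℝ)/((n:ℝ)*(m:ℝ)) := by positivity
      have hjd : (j:ℝ)/((n:ℝ)*(m:ℝ)) ≤ (j:ℝ)/n := by
        apply div_le_div_of_nonneg_left (by positivity) hn0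
        nlinarith
      have b1 := aux_log_bound hja (hjb.trans hKn)
      have b2 := aux_log_bound hjc ((hjd.trans hjb).trans hKn)
      have habs : |(Real.log (1 - (j:ℝ)/n) + (j:ℝ)/n)
          - (Real.log (1 - (j:ℝ)/((n:ℝ)*(m:ℝ))) + (j:ℝ)/((n:ℝ)*(m:ℝ)))|
          ≤ |Real.log (1 - (j:ℝ)/n) + (j:ℝ)/n|
            + |Real.log (1 - (j:ℝ)/((n:ℝ)*(m:ℝ))) + (j:ℝ)/((n:ℝ)*(m:ℝ))| := abs_sub _ _
      have hsq1 : ((j:ℝ)/n)^2 ≤ ((⌊x * Real.sqrt n⌋₊:ℝ)/n)^2 := pow_le_pow_left₀ hja hjb 2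
      have hsq2 : ((j:ℝ)/((n:ℝ)*(m:ℝ)))^2 ≤ ((⌊x * Real.sqrt n⌋₊:ℝ)/n)^2 :=
        pow_le_pow_left₀ hjc (hjd.trans hjb) 2
      linarith
    rw [Real.norm_eq_abs, hT]
    calc |∑ j ∈ Finset.range (⌊x * Real.sqrt n⌋₊+1),
        ((Real.log (1 - (j:ℝ)/n) + (j:ℝ)/n)
          - (Real.log (1 - (j:ℝ)/((n:ℝ)*(m:ℝ))) + (j:ℝ)/((n:ℝ)*(m:ℝ))))|
        ≤ ∑ j ∈ Finset.range (⌊x * Real.sqrt n⌋₊+1),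
          |(Real.log (1 - (j:ℝ)/n) + (j:ℝ)/n)
            - (Real.log (1 - (j:ℝ)/((n:ℝ)*(m:ℝ))) + (j:ℝ)/((n:ℝ)*(m:ℝ)))| :=
        Finset.abs_sum_le_sum_abs _ _
      _ ≤ ∑ _j ∈ Finset.range (⌊x * Real.sqrt n⌋₊+1), 4*((⌊x * Real.sqrt n⌋₊:ℝ)/n)^2 :=
        Finset.sum_le_sum hterm
      _ = ((⌊x * Real.sqrt n⌋₊:ℝ)+1) * (4*((⌊x * Real.sqrt n⌋₊:ℝ)/n)^2) := by
        rw [Finset.sum_const, Finset.card_range, nsmul_eq_mul]; push_cast; ring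
      _ = 4 * ((⌊x * Real.sqrt n⌋₊:ℝ)^2 * ((⌊x * Real.sqrt n⌋₊:ℝ)+1) / (n:ℝ)^2) := by
        field_simp
  have hEterm : Tendsto T atTop (nhds 0) := by
    refine squeeze_zero_norm' hEbound ?_
    simpa using h6.const_mul 4
  have hSlim : Tendsto S atTop (nhds (-(((m:ℝ)-1) * x^2)/(2*(m:ℝ)))) := by
    have h := hEterm.sub hmain
    rw [zero_sub] at h
    have hval : -((1 - 1/(m:ℝ)) * (x*x)/2) = -(((m:ℝ)-1) * x^2)/(2*(m:ℝ)) := by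
      field_simp
    rw [hval] at h
    exact h.congr fun n => (hS_eq n).symm
  have hexpS : Tendsto (fun n : ℕ => Real.exp (S n) / Ec) atTop (nhds 1) := by
    have h : Tendsto (fun n : ℕ => Real.exp (S n)) atTop (nhds Ec) := by
      rw [hEc]
      exact (Real.continuous_exp.tendsto _).comp hSlim
    have h' := h.div_const Ec
    rwa [div_self hEcpos.ne'] at h'
  have hF : Tendsto (fun n : ℕ =>
      (⌊x * Real.sqrt n⌋₊:ℝ) * Real.sqrt n / (((n:ℝ) - ⌊x * Real.sqrt n⌋₊) * x))
      atTop (nhds 1) := by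
    have hden : Tendsto (fun n : ℕ => 1 - (⌊x * Real.sqrt n⌋₊:ℝ)/n) atTop (nhds 1) := by
      have := (tendsto_const_nhds : Tendsto (fun _ : ℕ => (1:ℝ)) atTop (nhds 1)).sub h3
      simpa using this
    have h := h1.div hden (by norm_num)
    rw [div_one] at h
    refine h.congr' ?_
    filter_upwards [hev, eventually_ge_atTop 1] with n hn2 hn1
    have hn0 : (0:ℝ) < n := by exact_mod_cast hn1
    have hs0 : 0 < Real.sqrt n := Real.sqrt_pos.2 hn0
    have hKltn : (⌊x * Real.sqrt n⌋₊:ℝ) < n := by exact_mod_cast (by omega : ⌊x * Real.sqrt n⌋₊ < n)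
    have hss : Real.sqrt n * Real.sqrt n = (n:ℝ) := Real.mul_self_sqrt hn0.le
    have hnk : (0:ℝ) < (n:ℝ) - ⌊x * Real.sqrt n⌋₊ := by linarith
    show (⌊x * Real.sqrt n⌋₊:ℝ) / (x * Real.sqrt n) / (1 - (⌊x * Real.sqrt n⌋₊:ℝ) / n)
        = (⌊x * Real.sqrt n⌋₊:ℝ) * Real.sqrt n / (((n:ℝ) - ⌊x * Real.sqrt n⌋₊) * x)
    have hden2 : (0:ℝ) < 1 - (⌊x * Real.sqrt n⌋₊:ℝ) / n := by
      rw [sub_pos, div_lt_one hn0]; exact hKltn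
    rw [div_eq_div_iff hden2.ne' (by positivity)]
    field_simp
    linear_combination (-(⌊x * Real.sqrt n⌋₊:ℝ)) * hss
  refine Tendsto.congr' ?_ (by simpa using hF.mul hexpS)
  filter_upwards [hev, eventually_ge_atTop 1] with n hn2 hn1
  set K := ⌊x * Real.sqrt n⌋₊ with hKdef
  have hK1 : K + 1 ≤ n := by omega
  have hmn : 1 ≤ m := by omega
  have hn0 : (0:ℝ) < n := by exact_mod_cast hn1
  have hs0 : 0 < Real.sqrt n := Real.sqrt_pos.2 hn0
  have hss : Real.sqrt n * Real.sqrt n = (n:ℝ) := Real.mul_self_sqrt hn0.le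
  have hKltn : (K:ℝ) < n := by exact_mod_cast (by omega : K < n)
  have hC := aux_choose_ratio m n K hmn hK1
  have hd1 : (n.descFactorial (K + 1) : ℝ) = ∏ j ∈ Finset.range (K+1), ((n:ℝ) - j) := by
    rw [Nat.descFactorial_eq_prod_range, Nat.cast_prod]
    refine Finset.prod_congr rfl fun j hj => ?_
    have hjn : j ≤ n := by have := Finset.mem_range.1 hj; omega
    exact Nat.cast_sub hjn
  have hnlem : n ≤ n*m := Nat.le_mul_of_pos_right n (by omega)
  have hd2 : ((n*m).descFactorial (K + 1) : ℝ)
      = ∏ j ∈ Finset.range (K+1), ((n:ℝ) * (m:ℝ) - j) := by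
    rw [Nat.descFactorial_eq_prod_range, Nat.cast_prod]
    refine Finset.prod_congr rfl fun j hj => ?_
    have hjn : j ≤ n*m := by have := Finset.mem_range.1 hj; omega
    rw [Nat.cast_sub hjn]
    push_cast
    ring
  have hP1 : 0 < ∏ j ∈ Finset.range (K+1), ((n:ℝ) - j) := by
    refine Finset.prod_pos fun j hj => ?_
    have hjn : (j:ℝ) < n := by
      have := Finset.mem_range.1 hj
      exact_mod_cast (by omega : j < n)
    linarith
  have hP2 : 0 < ∏ j ∈ Finset.range (K+1), ((n:ℝ) * (m:ℝ) - j) := by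
    refine Finset.prod_pos fun j hj => ?_
    have hjn : (j:ℝ) < n := by
      have := Finset.mem_range.1 hj
      exact_mod_cast (by omega : j < n)
    nlinarith
  have hexp_eq : Real.exp (S n) = (m:ℝ)^(K+1) * ((∏ j ∈ Finset.range (K+1), ((n:ℝ) - j))
      / (∏ j ∈ Finset.range (K+1), ((n:ℝ) * (m:ℝ) - j))) := by
    simp only [hS, ← hKdef]
    rw [Real.exp_sum]
    have hfac : ∀ j ∈ Finset.range (K+1),
        Real.exp (Real.log (1 - (j:ℝ)/n) - Real.log (1 - (j:ℝ)/((n:ℝ)*(m:ℝ))))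
          = (m:ℝ) * ((n:ℝ) - j) / ((n:ℝ)*(m:ℝ) - j) := by
      intro j hj
      have hjn : (j:ℝ) < n := by
        have := Finset.mem_range.1 hj
        exact_mod_cast (by omega : j < n)
      have hnm' : (0:ℝ) < (n:ℝ)*(m:ℝ) := by positivity
      have hjnm : (j:ℝ) < (n:ℝ)*(m:ℝ) := by nlinarith
      have hpos1 : 0 < 1 - (j:ℝ)/n := by rw [sub_pos, div_lt_one hn0]; exact hjn
      have hpos2 : 0 < 1 - (j:ℝ)/((n:ℝ)*(m:ℝ)) := by rw [sub_pos, div_lt_one hnm']; exact hjnm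
      rw [Real.exp_sub, Real.exp_log hpos1, Real.exp_log hpos2]
      rw [div_eq_div_iff hpos2.ne' (by linarith : ((n:ℝ)*(m:ℝ) - j) ≠ 0)]
      field_simp
    rw [Finset.prod_congr rfl hfac, Finset.prod_div_distrib, Finset.prod_mul_distrib,
      Finset.prod_const, Finset.card_range, mul_div_assoc]
  rw [mul_div_assoc ((K:ℝ) / ((n:ℝ) - K) * (m:ℝ) ^ K * ((m:ℝ) - 1)), hC, hd1, hd2]
  rw [hexp_eq]
  have hnK : ((n:ℝ) - K) ≠ 0 := by linarith
  have hm1ne : (m:ℝ) - 1 ≠ 0 := by linarith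
  field_simp [hnK, hm1ne, hP1.ne', hP2.ne', hEcpos.ne', hxne, hs0.ne', hmpos.ne']
  ring
end

section
/- For fixed ρ > 0 and fixed x > 0, with k = ⌊x√n⌋, the probability Pr{X_n^ρ = k} = k·ρ^k·(1+ρ)·(n)_k / (nρ+k)_{k+1} is asymptotic to ((1+ρ)/ρ)·x·exp(-(1+ρ)x²/(2ρ))·(1/√n) as n → ∞. -/
open Filter

private lemma sum_range_cast (k : ℕ) :
    ∑ j ∈ Finset.range k, (j : ℝ) = k * ((k : ℝ) - 1) / 2 := by
  induction k with
  | zero => simp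
  | succ m ih => rw [Finset.sum_range_succ, ih]; push_cast; ring

private lemma sum_lin (N d t : ℝ) (K : ℕ) :
    ∑ j ∈ Finset.range K, (-((j : ℝ) / N) - ((j : ℝ) + 1) / d + t)
      = -(((K : ℝ) * ((K : ℝ) - 1) / 2) / N)
        - (((K : ℝ) * ((K : ℝ) - 1) / 2 + K) / d) + K * t := by
  have h : ∀ j ∈ Finset.range K,
      -((j : ℝ) / N) - ((j : ℝ) + 1) / d + t
        = (-(1 / N) - 1 / d) * (j : ℝ) + (t - 1 / d) := fun j _ => by ring
  rw [Finset.sum_congr rfl h, Finset.sum_add_distrib, ← Finset.mul_sum,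
    sum_range_cast, Finset.sum_const, Finset.card_range, nsmul_eq_mul]
  ring

private lemma prod_fall (N ρ : ℝ) (K : ℕ) :
    ∏ j ∈ Finset.range (K + 1), (N * ρ + (K : ℝ) - (j : ℝ))
      = (N * ρ) * ∏ j ∈ Finset.range K, (N * ρ + (j : ℝ) + 1) := by
  have h1 : ∀ j ∈ Finset.range (K + 1),
      N * ρ + (K : ℝ) - (j : ℝ) = N * ρ + ((K - j : ℕ) : ℝ) := by
    intro j hj
    have hjk : j ≤ K := Nat.lt_succ_iff.mp (Finset.mem_range.mp hj)
    rw [Nat.cast_sub hjk]; ring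
  rw [Finset.prod_congr rfl h1]
  have h2 := Finset.prod_range_reflect (fun i : ℕ => N * ρ + (i : ℝ)) (K + 1)
  simp only [Nat.add_sub_cancel] at h2
  rw [h2, Finset.prod_range_succ']
  have h3 : ∀ i ∈ Finset.range K, N * ρ + ((i + 1 : ℕ) : ℝ) = N * ρ + (i : ℝ) + 1 := by
    intro i _; push_cast; ring
  rw [Finset.prod_congr rfl h3]
  push_cast
  ring

private lemma factor_lb {a b : ℝ} (ha0 : 0 ≤ a) (ha : a ≤ 1 / 2) (hb : 0 ≤ b) :
    Real.exp (-a - b - (2 * a ^ 2 + b ^ 2)) ≤ (1 - a) / (1 + b) := by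
  have h1a : (0 : ℝ) < 1 - a := by linarith
  have h1b : (0 : ℝ) < 1 + b := by linarith
  have key : 1 / (1 - a) ≤ Real.exp (a / (1 - a)) := by
    have h := Real.add_one_le_exp (a / (1 - a))
    have heq : a / (1 - a) + 1 = 1 / (1 - a) := by field_simp; ring
    linarith
  have h2 : Real.exp (-(a / (1 - a))) ≤ 1 - a := by
    rw [Real.exp_neg]
    calc (Real.exp (a / (1 - a)))⁻¹ ≤ (1 / (1 - a))⁻¹ :=
          inv_anti₀ (by positivity) key
      _ = 1 - a := by rw [one_div, inv_inv]
  have h3 : Real.exp (-a - 2 * a ^ 2) ≤ 1 - a := by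
    refine le_trans (Real.exp_le_exp.mpr ?_) h2
    have hd : a / (1 - a) ≤ a + 2 * a ^ 2 := by
      rw [div_le_iff₀ h1a]; nlinarith
    linarith
  have h4 : Real.exp (-b) ≤ 1 / (1 + b) := by
    rw [Real.exp_neg, one_div]
    exact inv_anti₀ h1b (by linarith [Real.add_one_le_exp b])
  calc Real.exp (-a - b - (2 * a ^ 2 + b ^ 2))
      ≤ Real.exp ((-a - 2 * a ^ 2) + (-b)) := by
        apply Real.exp_le_exp.mpr; nlinarith [sq_nonneg b]
    _ = Real.exp (-a - 2 * a ^ 2) * Real.exp (-b) := Real.exp_add _ _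
    _ ≤ (1 - a) * (1 / (1 + b)) :=
        mul_le_mul h3 h4 (Real.exp_pos _).le h1a.le
    _ = (1 - a) / (1 + b) := by ring

private lemma factor_ub {a b : ℝ} (ha0 : 0 ≤ a) (ha : a ≤ 1 / 2) (hb : 0 ≤ b) :
    (1 - a) / (1 + b) ≤ Real.exp (-a - b + (2 * a ^ 2 + b ^ 2)) := by
  have h1a : (0 : ℝ) ≤ 1 - a := by linarith
  have h1b : (0 : ℝ) < 1 + b := by linarith
  have h2 : 1 - a ≤ Real.exp (-a) := by linarith [Real.add_one_le_exp (-a)]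
  have h3 : 1 / (1 + b) ≤ Real.exp (b ^ 2 - b) := by
    have key : 1 / (1 + b) ≤ Real.exp (-(b / (1 + b))) := by
      have h := Real.add_one_le_exp (-(b / (1 + b)))
      have heq : -(b / (1 + b)) + 1 = 1 / (1 + b) := by field_simp; ring
      linarith
    refine le_trans key (Real.exp_le_exp.mpr ?_)
    have hd : b - b ^ 2 ≤ b / (1 + b) := by
      rw [le_div_iff₀ h1b]; nlinarith
    linarith
  calc (1 - a) / (1 + b) = (1 - a) * (1 / (1 + b)) := by ring
    _ ≤ Real.exp (-a) * Real.exp (b ^ 2 - b) :=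
        mul_le_mul h2 h3 (by positivity) (Real.exp_nonneg _)
    _ = Real.exp (-a + (b ^ 2 - b)) := (Real.exp_add _ _).symm
    _ ≤ Real.exp (-a - b + (2 * a ^ 2 + b ^ 2)) := by
        apply Real.exp_le_exp.mpr; nlinarith [sq_nonneg a]

/-- For fixed `ρ > 0` and fixed `x > 0`, with `k = ⌊x √n⌋`, the probability
`Pr{X_n^ρ = k} = k ρ^k (1+ρ) (n)_k / (nρ+k)_{k+1}` is asymptotic to
`((1+ρ)/ρ) x exp(-(1+ρ)x²/(2ρ)) / √n` as `n → ∞`.  Here `(n)_k = ∏_{j<k} (n-j)`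
and `(nρ+k)_{k+1} = ∏_{j<k+1} (nρ+k-j)` are falling factorials. -/
theorem stmt7 (ρ : ℝ) (hρ : 0 < ρ) (x : ℝ) (hx : 0 < x) :
    Tendsto (fun n : ℕ =>
        ((fun k : ℕ =>
          ((k : ℝ) * ρ ^ k * (1 + ρ) * (∏ j ∈ Finset.range k, ((n : ℝ) - j)) /
              (∏ j ∈ Finset.range (k + 1), ((n : ℝ) * ρ + k - j))) /
            ((1 + ρ) / ρ * x * Real.exp (-((1 + ρ) * x ^ 2) / (2 * ρ)) / Real.sqrt n))) ⌊x * Real.sqrt n⌋₊)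
      atTop (nhds 1) := by
  have hρ1 : (0 : ℝ) < 1 + ρ := by linarith
  set c : ℝ := (1 + ρ) * x ^ 2 / (2 * ρ) with hc
  set k : ℕ → ℕ := fun n => ⌊x * Real.sqrt n⌋₊ with hkdef
  set r : ℕ → ℝ := fun n => (k n : ℝ) / Real.sqrt n with hrdef
  set Q : ℕ → ℝ := fun n =>
    ∏ j ∈ Finset.range (k n), (ρ * ((n : ℝ) - j) / ((n : ℝ) * ρ + j + 1)) with hQdef
  set A : ℕ → ℝ := fun n => ((k n : ℝ) * ((k n : ℝ) - 1) / 2) / n with hAdef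
  set B : ℕ → ℝ := fun n =>
    ((k n : ℝ) * ((k n : ℝ) - 1) / 2 + (k n : ℝ)) / ((n : ℝ) * ρ) with hBdef
  set E : ℕ → ℝ := fun n =>
    2 * ((k n : ℝ) / n) ^ 2 + ((k n : ℝ) / ((n : ℝ) * ρ)) ^ 2 with hEdef
  -- √n → ∞
  have hs : Tendsto (fun n : ℕ => Real.sqrt n) atTop atTop := by
    refine tendsto_atTop_atTop.mpr fun b => ⟨⌈(max b 0) ^ 2⌉₊, fun n hn => ?_⟩
    calc b ≤ max b 0 := le_max_left _ _
      _ = Real.sqrt ((max b 0) ^ 2) := (Real.sqrt_sq (le_max_right _ _)).symm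
      _ ≤ Real.sqrt n :=
          Real.sqrt_le_sqrt (le_trans (Nat.le_ceil _) (by exact_mod_cast hn))
  have hinv : Tendsto (fun n : ℕ => 1 / Real.sqrt n) atTop (nhds 0) := by
    have := hs.inv_tendsto_atTop; simp only [one_div]; exact this
  -- r n → x
  have hrx : Tendsto r atTop (nhds x) := by
    have hlow : Tendsto (fun n : ℕ => x - 1 / Real.sqrt n) atTop (nhds x) := by
      simpa using tendsto_const_nhds.sub hinv
    refine tendsto_of_tendsto_of_tendsto_of_le_of_le' hlow tendsto_const_nhds ?_ ?_
    · filter_upwards [hs.eventually_ge_atTop 1] with n hn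
      have hspos : (0 : ℝ) < Real.sqrt n := by linarith
      have hfl : x * Real.sqrt n - 1 < (k n : ℝ) := Nat.sub_one_lt_floor _
      show x - 1 / Real.sqrt n ≤ (k n : ℝ) / Real.sqrt n
      have hE2 : (x - 1 / Real.sqrt n) * Real.sqrt n = x * Real.sqrt n - 1 := by
        field_simp
      rw [le_div_iff₀ hspos, hE2]
      linarith
    · filter_upwards [hs.eventually_ge_atTop 1] with n hn
      have hspos : (0 : ℝ) < Real.sqrt n := by linarith
      show (k n : ℝ) / Real.sqrt n ≤ x
      rw [div_le_iff₀ hspos]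
      exact Nat.floor_le (by positivity)
  -- k n / n → 0
  have hkn0 : Tendsto (fun n : ℕ => (k n : ℝ) / n) atTop (nhds 0) := by
    have h := hrx.mul hinv
    rw [mul_zero] at h
    refine h.congr' ?_
    filter_upwards [eventually_ge_atTop 1] with n hn
    have hn0 : (0 : ℝ) < (n : ℝ) := by exact_mod_cast hn
    have hss : Real.sqrt n * Real.sqrt n = (n : ℝ) := Real.mul_self_sqrt hn0.le
    have hspos : (0 : ℝ) < Real.sqrt n := Real.sqrt_pos.mpr hn0
    show (k n : ℝ) / Real.sqrt n * (1 / Real.sqrt n) = (k n : ℝ) / n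
    rw [div_mul_div_comm, mul_one, hss]
  -- 1 ≤ k n eventually
  have hxsqrt : Tendsto (fun n : ℕ => x * Real.sqrt n) atTop atTop :=
    hs.const_mul_atTop hx
  have hk1 : ∀ᶠ n : ℕ in atTop, 1 ≤ k n := by
    filter_upwards [hxsqrt.eventually_ge_atTop 1] with n hn
    exact Nat.le_floor (by exact_mod_cast hn)
  have hhalf : ∀ᶠ n : ℕ in atTop, (k n : ℝ) / n ≤ 1 / 2 :=
    (hkn0.eventually_lt_const (by norm_num : (0 : ℝ) < 1 / 2)).mono fun n h => h.le
  -- A + B → c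
  have hAB : Tendsto (fun n => A n + B n) atTop (nhds c) := by
    have h : Tendsto (fun n : ℕ =>
        ((r n * r n - (k n : ℝ) / n) / 2 + (r n * r n + (k n : ℝ) / n) / (2 * ρ)))
        atTop (nhds ((x * x - 0) / 2 + (x * x + 0) / (2 * ρ))) :=
      (((hrx.mul hrx).sub hkn0).div_const 2).add
        (((hrx.mul hrx).add hkn0).div_const (2 * ρ))
    have hval : (x * x - 0) / 2 + (x * x + 0) / (2 * ρ) = c := by
      rw [hc]; field_simp; ring
    rw [hval] at h
    refine h.congr' ?_
    filter_upwards [eventually_ge_atTop 1] with n hn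
    have hn0 : (0 : ℝ) < (n : ℝ) := by exact_mod_cast hn
    have hss : Real.sqrt n * Real.sqrt n = (n : ℝ) := Real.mul_self_sqrt hn0.le
    have hspos : (0 : ℝ) < Real.sqrt n := Real.sqrt_pos.mpr hn0
    simp only [hrdef, hAdef, hBdef]
    field_simp
    rw [← hss]
    rw [Real.sqrt_mul_self hspos.le]; ring
  -- k·E → 0
  have hkE : Tendsto (fun n => (k n : ℝ) * E n) atTop (nhds 0) := by
    have h : Tendsto (fun n : ℕ => r n ^ 3 * (1 / Real.sqrt n) * (2 + 1 / ρ ^ 2))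
        atTop (nhds (x ^ 3 * 0 * (2 + 1 / ρ ^ 2))) :=
      ((hrx.pow 3).mul hinv).mul_const _
    rw [mul_zero, zero_mul] at h
    refine h.congr' ?_
    filter_upwards [eventually_ge_atTop 1] with n hn
    have hn0 : (0 : ℝ) < (n : ℝ) := by exact_mod_cast hn
    have hss : Real.sqrt n * Real.sqrt n = (n : ℝ) := Real.mul_self_sqrt hn0.le
    have hspos : (0 : ℝ) < Real.sqrt n := Real.sqrt_pos.mpr hn0
    simp only [hrdef, hEdef]
    obtain ⟨s, hs'⟩ : ∃ s : ℝ, Real.sqrt n = s := ⟨_, rfl⟩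
    rw [hs'] at hss hspos ⊢
    rw [← hss]
    field_simp
  -- two-sided bound on Q
  have hQbd : ∀ᶠ n : ℕ in atTop,
      Real.exp (-(A n + B n) - (k n : ℝ) * E n) ≤ Q n ∧
      Q n ≤ Real.exp (-(A n + B n) + (k n : ℝ) * E n) := by
    filter_upwards [eventually_ge_atTop 1, hhalf] with n hn hhn
    have hn0 : (0 : ℝ) < (n : ℝ) := by exact_mod_cast hn
    have hfac : ∀ j ∈ Finset.range (k n),
        ρ * ((n : ℝ) - j) / ((n : ℝ) * ρ + j + 1)
          = (1 - (j : ℝ) / n) / (1 + ((j : ℝ) + 1) / ((n : ℝ) * ρ)) := by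
      intro j _
      rw [div_eq_div_iff (by positivity) (by positivity)]
      field_simp
      ring
    have hbd : ∀ j ∈ Finset.range (k n),
        Real.exp (-((j : ℝ) / n) - ((j : ℝ) + 1) / ((n : ℝ) * ρ) + -E n)
          ≤ ρ * ((n : ℝ) - j) / ((n : ℝ) * ρ + j + 1) ∧
        ρ * ((n : ℝ) - j) / ((n : ℝ) * ρ + j + 1)
          ≤ Real.exp (-((j : ℝ) / n) - ((j : ℝ) + 1) / ((n : ℝ) * ρ) + E n) := by
      intro j hj
      have hjk : (j : ℝ) + 1 ≤ (k n : ℝ) := by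
        exact_mod_cast Nat.succ_le_of_lt (Finset.mem_range.mp hj)
      have hjk' : j < k n := Finset.mem_range.mp hj
      have ha0 : 0 ≤ (j : ℝ) / n := by positivity
      have e1 : (j : ℝ) / n ≤ (k n : ℝ) / n := by gcongr <;> exact_mod_cast hjk'.le
      have haj : (j : ℝ) / n ≤ 1 / 2 := le_trans e1 hhn
      have hb0 : 0 ≤ ((j : ℝ) + 1) / ((n : ℝ) * ρ) := by positivity
      have e2 : ((j : ℝ) + 1) / ((n : ℝ) * ρ) ≤ (k n : ℝ) / ((n : ℝ) * ρ) := by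
        gcongr
      have hEb : 2 * ((j : ℝ) / n) ^ 2 + (((j : ℝ) + 1) / ((n : ℝ) * ρ)) ^ 2 ≤ E n := by
        simp only [hEdef]
        have p1 := pow_le_pow_left₀ ha0 e1 2
        have p2 := pow_le_pow_left₀ hb0 e2 2
        linarith
      rw [hfac j hj]
      constructor
      · refine le_trans (Real.exp_le_exp.mpr ?_)
          (factor_lb ha0 haj hb0)
        linarith
      · refine le_trans (factor_ub ha0 haj hb0) (Real.exp_le_exp.mpr ?_)
        linarith
    have hsum_lo : ∑ j ∈ Finset.range (k n),
        (-((j : ℝ) / n) - ((j : ℝ) + 1) / ((n : ℝ) * ρ) + -E n)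
          = -(A n + B n) - (k n : ℝ) * E n := by
      simp only [hAdef, hBdef]; rw [sum_lin]; ring
    have hsum_hi : ∑ j ∈ Finset.range (k n),
        (-((j : ℝ) / n) - ((j : ℝ) + 1) / ((n : ℝ) * ρ) + E n)
          = -(A n + B n) + (k n : ℝ) * E n := by
      simp only [hAdef, hBdef]; rw [sum_lin]; ring
    constructor
    · rw [← hsum_lo, Real.exp_sum]
      simp only [hQdef]
      exact Finset.prod_le_prod (fun j _ => (Real.exp_pos _).le)
        (fun j hj => (hbd j hj).1)
    · rw [← hsum_hi, Real.exp_sum]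
      simp only [hQdef]
      refine Finset.prod_le_prod (fun j hj => ?_) (fun j hj => (hbd j hj).2)
      rw [hfac j hj]
      have hjk : (j : ℝ) + 1 ≤ (k n : ℝ) := by
        exact_mod_cast Nat.succ_le_of_lt (Finset.mem_range.mp hj)
      have haj : (j : ℝ) / n ≤ 1 / 2 := by
        refine le_trans ?_ hhn
        gcongr <;> exact_mod_cast (Finset.mem_range.mp hj).le
      have hb0 : 0 ≤ ((j : ℝ) + 1) / ((n : ℝ) * ρ) := by positivity
      apply div_nonneg (by linarith) (by linarith)
  -- exp c * Q → 1
  have hQ1 : Tendsto (fun n => Real.exp c * Q n) atTop (nhds 1) := by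
    have hlowt : Tendsto (fun n => Real.exp (c + (-(A n + B n) - (k n : ℝ) * E n)))
        atTop (nhds 1) := by
      have h : Tendsto (fun n => c + (-(A n + B n) - (k n : ℝ) * E n)) atTop
          (nhds (c + (-c - 0))) := tendsto_const_nhds.add (hAB.neg.sub hkE)
      have h2 : Tendsto (fun n => Real.exp (c + (-(A n + B n) - (k n : ℝ) * E n)))
          atTop (nhds (Real.exp (c + (-c - 0)))) :=
        (Real.continuous_exp.tendsto _).comp h
      have he : c + (-c - 0) = 0 := by ring
      rw [he, Real.exp_zero] at h2
      exact h2
    have hupt : Tendsto (fun n => Real.exp (c + (-(A n + B n) + (k n : ℝ) * E n)))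
        atTop (nhds 1) := by
      have h : Tendsto (fun n => c + (-(A n + B n) + (k n : ℝ) * E n)) atTop
          (nhds (c + (-c + 0))) := tendsto_const_nhds.add (hAB.neg.add hkE)
      have h2 : Tendsto (fun n => Real.exp (c + (-(A n + B n) + (k n : ℝ) * E n)))
          atTop (nhds (Real.exp (c + (-c + 0)))) :=
        (Real.continuous_exp.tendsto _).comp h
      have he : c + (-c + 0) = 0 := by ring
      rw [he, Real.exp_zero] at h2
      exact h2
    refine tendsto_of_tendsto_of_tendsto_of_le_of_le' hlowt hupt ?_ ?_
    · filter_upwards [hQbd] with n hn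
      rw [Real.exp_add]
      exact mul_le_mul_of_nonneg_left hn.1 (Real.exp_pos _).le
    · filter_upwards [hQbd] with n hn
      rw [Real.exp_add]
      exact mul_le_mul_of_nonneg_left hn.2 (Real.exp_pos _).le
  -- main asymptotic identity
  have hmain : (fun n : ℕ => (r n / x) * (Real.exp c * Q n)) =ᶠ[atTop]
      (fun n : ℕ =>
        ((fun k : ℕ =>
          ((k : ℝ) * ρ ^ k * (1 + ρ) * (∏ j ∈ Finset.range k, ((n : ℝ) - j)) /
              (∏ j ∈ Finset.range (k + 1), ((n : ℝ) * ρ + k - j))) /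
            ((1 + ρ) / ρ * x * Real.exp (-((1 + ρ) * x ^ 2) / (2 * ρ)) / Real.sqrt n))) ⌊x * Real.sqrt n⌋₊) := by
    filter_upwards [eventually_ge_atTop 1] with n hn
    have hn0 : (0 : ℝ) < (n : ℝ) := by exact_mod_cast hn
    have hss : Real.sqrt n * Real.sqrt n = (n : ℝ) := Real.mul_self_sqrt hn0.le
    have hspos : (0 : ℝ) < Real.sqrt n := Real.sqrt_pos.mpr hn0
    have hfloor : ⌊x * Real.sqrt n⌋₊ = k n := rfl
    rw [hfloor]
    have hexp : -((1 + ρ) * x ^ 2) / (2 * ρ) = -c := by rw [hc]; ring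
    rw [hexp, Real.exp_neg]
    have hden : ∏ j ∈ Finset.range (k n + 1), ((n : ℝ) * ρ + (k n : ℝ) - (j : ℝ))
        = ((n : ℝ) * ρ) * ∏ j ∈ Finset.range (k n), ((n : ℝ) * ρ + (j : ℝ) + 1) :=
      prod_fall (n : ℝ) ρ (k n)
    rw [hden]
    have hnum : ρ ^ (k n) * ∏ j ∈ Finset.range (k n), ((n : ℝ) - (j : ℝ))
        = ∏ j ∈ Finset.range (k n), (ρ * ((n : ℝ) - (j : ℝ))) := by
      rw [Finset.prod_mul_distrib, Finset.prod_const, Finset.card_range]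
    have hQsplit : Q n = (∏ j ∈ Finset.range (k n), (ρ * ((n : ℝ) - (j : ℝ))))
        / (∏ j ∈ Finset.range (k n), ((n : ℝ) * ρ + (j : ℝ) + 1)) := by
      simp only [hQdef]; exact Finset.prod_div_distrib _ _
    have hP2 : (0 : ℝ) < ∏ j ∈ Finset.range (k n), ((n : ℝ) * ρ + (j : ℝ) + 1) :=
      Finset.prod_pos fun j _ => by positivity
    rw [hQsplit, ← hnum]
    simp only [hrdef]
    have hec : Real.exp c ≠ 0 := (Real.exp_pos c).ne'
    have hP2' := hP2.ne'
    obtain ⟨s, hs'⟩ : ∃ s : ℝ, Real.sqrt n = s := ⟨_, rfl⟩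
    rw [hs'] at hss hspos ⊢
    rw [← hss]
    field_simp
  -- conclude
  have hfinal : Tendsto (fun n : ℕ => (r n / x) * (Real.exp c * Q n)) atTop (nhds 1) := by
    have h := (hrx.div_const x).mul hQ1
    rw [div_self hx.ne', one_mul] at h
    exact h
  exact hfinal.congr' hmain
end

section
/- With the preferential attachment in-degree distribution (i.i.d. generalized negative binomial with parameter ρ conditioned to sum to n), the number of cyclic vertices satisfies Pr{X_n^ρ = k} = k·ρ^k·(1+ρ)·(n)_k/(nρ+k)_{k+1} for 1 ≤ k < n, and Pr{X_n^ρ = n} = ρ^n·n!·Γ(nρ)/Γ(n+nρ). -/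
open MeasureTheory ProbabilityTheory
open Finset

namespace Stmt15

noncomputable def f (x : ℝ) (a : ℕ) : ℝ := Real.Gamma (a + x) / (a.factorial * Real.Gamma x)

lemma f_zero {x : ℝ} (hx : 0 < x) : f x 0 = 1 := by
  simp [f, div_self (ne_of_gt (Real.Gamma_pos_of_pos hx))]

lemma f_pos {x : ℝ} (hx : 0 < x) (a : ℕ) : 0 < f x a := by
  have h1 : (0:ℝ) < Real.Gamma (a + x) := Real.Gamma_pos_of_pos (by positivity)
  have h2 : (0:ℝ) < Real.Gamma x := Real.Gamma_pos_of_pos hx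
  have h3 : (0:ℝ) < (a.factorial : ℝ) := by positivity
  exact div_pos h1 (by positivity)

lemma Gamma_succ_arg {x : ℝ} (hx : 0 < x) (a : ℕ) :
    Real.Gamma ((a+1 : ℕ) + x) = ((a:ℝ) + x) * Real.Gamma (a + x) := by
  have : ((a+1 : ℕ) : ℝ) + x = ((a:ℝ) + x) + 1 := by push_cast; ring
  rw [this, Real.Gamma_add_one (by positivity)]

lemma f_succ {x : ℝ} (hx : 0 < x) (a : ℕ) :
    ((a:ℝ)+1) * f x (a+1) = ((a:ℝ) + x) * f x a := by
  have hG : Real.Gamma x ≠ 0 := ne_of_gt (Real.Gamma_pos_of_pos hx)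
  have hfa : ((a.factorial : ℝ)) ≠ 0 := by positivity
  unfold f
  rw [Gamma_succ_arg hx a, Nat.factorial_succ]
  push_cast
  field_simp

lemma f_shift1 {x : ℝ} (hx : 0 < x) (a : ℕ) :
    ((a:ℝ)+1) * f x (a+1) = x * f (x+1) a := by
  have hG : Real.Gamma x ≠ 0 := ne_of_gt (Real.Gamma_pos_of_pos hx)
  have hfa : ((a.factorial : ℝ)) ≠ 0 := by positivity
  unfold f
  have h1 : Real.Gamma (x+1) = x * Real.Gamma x := Real.Gamma_add_one (ne_of_gt hx)
  have h2 : ((a:ℝ) + (x+1)) = ((a+1:ℕ):ℝ) + x := by push_cast; ring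
  rw [h1, h2, Nat.factorial_succ]
  push_cast
  field_simp

lemma f_shift2 {x : ℝ} (hx : 0 < x) (a : ℕ) :
    ((a:ℝ)+1) * ((a:ℝ)+2) * f x (a+2) = x * (x+1) * f (x+2) a := by
  have h1 : ((a:ℝ)+2) * f x (a+2) = x * f (x+1) (a+1) := by
    have := f_shift1 hx (a+1); push_cast at this ⊢; linarith [this]
  have h2 : ((a:ℝ)+1) * f (x+1) (a+1) = (x+1) * f (x+2) a := by
    have := f_shift1 (by linarith : (0:ℝ) < x+1) a
    rw [show x+1+1 = x+2 by ring] at this; exact this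
  calc ((a:ℝ)+1) * ((a:ℝ)+2) * f x (a+2) = ((a:ℝ)+1) * (((a:ℝ)+2) * f x (a+2)) := by ring
    _ = x * (((a:ℝ)+1) * f (x+1) (a+1)) := by rw [h1]; ring
    _ = x * ((x+1) * f (x+2) a) := by rw [h2]
    _ = x * (x+1) * f (x+2) a := by ring

lemma f_one {x : ℝ} (hx : 0 < x) : f x 1 = x := by
  unfold f
  rw [Nat.factorial_one, Nat.cast_one, add_comm, Real.Gamma_add_one (ne_of_gt hx)]
  rw [one_mul, mul_div_assoc, div_self (ne_of_gt (Real.Gamma_pos_of_pos hx)), mul_one]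

lemma vand {x y : ℝ} (hx : 0 < x) (hy : 0 < y) :
    ∀ N : ℕ, ∑ p ∈ antidiagonal N, f x p.1 * f y p.2 = f (x+y) N := by
  intro N
  induction N with
  | zero => simp [Finset.Nat.antidiagonal_zero, f_zero hx, f_zero hy, f_zero (by linarith : (0:ℝ) < x + y)]
  | succ N ih =>
    have hNe : ((N:ℝ)+1) ≠ 0 := by positivity
    have key : ((N:ℝ)+1) * ∑ p ∈ antidiagonal (N+1), f x p.1 * f y p.2
        = ((N:ℝ) + x + y) * ∑ p ∈ antidiagonal N, f x p.1 * f y p.2 := by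
      rw [Finset.mul_sum]
      have hsplit : ∀ p ∈ antidiagonal (N+1),
          ((N:ℝ)+1) * (f x p.1 * f y p.2)
          = (p.1:ℝ) * (f x p.1 * f y p.2) + (p.2:ℝ) * (f x p.1 * f y p.2) := by
        intro p hp
        have := Finset.HasAntidiagonal.mem_antidiagonal.mp hp
        have : ((p.1:ℝ) + p.2) = (N:ℝ)+1 := by exact_mod_cast this
        rw [← this]; ring
      rw [Finset.sum_congr rfl hsplit, Finset.sum_add_distrib]
      have h1 : ∑ p ∈ antidiagonal (N+1), (p.1 : ℝ) * (f x p.1 * f y p.2)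
          = ∑ p ∈ antidiagonal N, ((p.1:ℝ) + x) * (f x p.1 * f y p.2) := by
        rw [Finset.Nat.sum_antidiagonal_succ]
        simp only [Nat.cast_zero, zero_mul, zero_add]
        apply Finset.sum_congr rfl
        intro p _
        have := f_succ hx p.1
        push_cast
        calc ((p.1:ℝ)+1) * (f x (p.1+1) * f y p.2) = (((p.1:ℝ)+1) * f x (p.1+1)) * f y p.2 := by ring
          _ = (((p.1:ℝ) + x) * f x p.1) * f y p.2 := by rw [this]
          _ = ((p.1:ℝ) + x) * (f x p.1 * f y p.2) := by ring
      have h2 : ∑ p ∈ antidiagonal (N+1), (p.2 : ℝ) * (f x p.1 * f y p.2)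
          = ∑ p ∈ antidiagonal N, ((p.2:ℝ) + y) * (f x p.1 * f y p.2) := by
        rw [Finset.Nat.sum_antidiagonal_succ']
        simp only [Nat.cast_zero, zero_mul, add_zero, zero_add, mul_zero]
        apply Finset.sum_congr rfl
        intro p _
        have := f_succ hy p.2
        push_cast
        calc ((p.2:ℝ)+1) * (f x p.1 * f y (p.2+1)) = (((p.2:ℝ)+1) * f y (p.2+1)) * f x p.1 := by ring
          _ = (((p.2:ℝ) + y) * f y p.2) * f x p.1 := by rw [this]
          _ = ((p.2:ℝ) + y) * (f x p.1 * f y p.2) := by ring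
      rw [h1, h2, ← Finset.sum_add_distrib, Finset.mul_sum]
      apply Finset.sum_congr rfl
      intro p hp
      have hmem := Finset.HasAntidiagonal.mem_antidiagonal.mp hp
      have : ((p.1:ℝ) + p.2) = (N:ℝ) := by exact_mod_cast hmem
      linear_combination (f x p.1 * f y p.2) * this
    have hr : ((N:ℝ)+1) * f (x+y) (N+1) = ((N:ℝ) + x + y) * f (x+y) N := by
      have := f_succ (by linarith : (0:ℝ) < x + y) N
      rw [show (N:ℝ) + (x+y) = (N:ℝ) + x + y by ring] at this
      exact this
    have := key
    rw [ih] at this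
    have h3 : ((N:ℝ)+1) * ∑ p ∈ antidiagonal (N+1), f x p.1 * f y p.2
        = ((N:ℝ)+1) * f (x+y) (N+1) := by rw [this, hr]
    exact mul_left_cancel₀ hNe h3


lemma shift_fst (s : ℕ) (A : ℕ → ℝ) (B : ℕ → ℝ) (N : ℕ) :
    ∑ p ∈ antidiagonal (N + 1), (if s + 1 ≤ p.1 then A (p.1 - (s+1)) else 0) * B p.2
    = ∑ p ∈ antidiagonal N, (if s ≤ p.1 then A (p.1 - s) else 0) * B p.2 := by
  rw [Finset.Nat.sum_antidiagonal_succ]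
  simp only [show ¬ (s + 1 ≤ 0) by omega, if_false, zero_mul, zero_add]
  apply Finset.sum_congr rfl
  intro p _
  congr 1
  have h : (s + 1 ≤ p.1 + 1) ↔ (s ≤ p.1) := by omega
  by_cases hc : s ≤ p.1
  · rw [if_pos (h.mpr hc), if_pos hc]
    congr 1
    omega
  · rw [if_neg (fun hh => hc (h.mp hh)), if_neg hc]

lemma shift_snd (t : ℕ) (A : ℕ → ℝ) (B : ℕ → ℝ) (N : ℕ) :
    ∑ p ∈ antidiagonal (N + 1), A p.1 * (if t + 1 ≤ p.2 then B (p.2 - (t+1)) else 0)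
    = ∑ p ∈ antidiagonal N, A p.1 * (if t ≤ p.2 then B (p.2 - t) else 0) := by
  rw [Finset.Nat.sum_antidiagonal_succ']
  simp only [show ¬ (t + 1 ≤ 0) by omega, if_false, mul_zero, zero_add]
  apply Finset.sum_congr rfl
  intro p _
  congr 1
  have h : (t + 1 ≤ p.2 + 1) ↔ (t ≤ p.2) := by omega
  by_cases hc : t ≤ p.2
  · rw [if_pos (h.mpr hc), if_pos hc]
    congr 1
    omega
  · rw [if_neg (fun hh => hc (h.mp hh)), if_neg hc]

lemma pair_shift {x y : ℝ} (hx : 0 < x) (hy : 0 < y) :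
    ∀ (s t N : ℕ), s + t ≤ N →
    ∑ p ∈ antidiagonal N, (if s ≤ p.1 then f x (p.1 - s) else 0) *
        (if t ≤ p.2 then f y (p.2 - t) else 0)
      = f (x+y) (N - s - t) := by
  intro s
  induction s with
  | zero =>
    intro t
    induction t with
    | zero =>
      intro N _
      simp only [Nat.zero_le, if_true, Nat.sub_zero]
      exact vand hx hy N
    | succ t iht =>
      intro N hN
      obtain ⟨M, rfl⟩ : ∃ M, N = M + 1 := ⟨N - 1, by omega⟩
      rw [shift_snd t (fun a => if 0 ≤ a then f x (a - 0) else 0) (f y) M]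
      · have := iht M (by omega)
        rw [this]
        congr 1
        omega
  | succ s ihs =>
    intro t N hN
    obtain ⟨M, rfl⟩ : ∃ M, N = M + 1 := ⟨N - 1, by omega⟩
    rw [shift_fst s (f x) (fun b => if t ≤ b then f y (b - t) else 0) M]
    rw [ihs t M (by omega)]
    congr 1
    omega

lemma sum_adt_succ {m N : ℕ} (F : (Fin (m+1) → ℕ) → ℝ) :
    ∑ d ∈ Finset.Nat.antidiagonalTuple (m+1) N, F d
    = ∑ p ∈ antidiagonal N, ∑ e ∈ Finset.Nat.antidiagonalTuple m p.2, F (Fin.cons p.1 e) := by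
  rw [← Finset.sum_sigma (antidiagonal N) (fun p => Finset.Nat.antidiagonalTuple m p.2)
      (fun q => F (Fin.cons q.1.1 q.2))]
  apply Finset.sum_bij' (i := fun (d : Fin (m+1) → ℕ) _ =>
      (⟨(d 0, ∑ i, d (Fin.succ i)), Fin.tail d⟩ : Σ p : ℕ × ℕ, Fin m → ℕ))
    (j := fun q _ => Fin.cons q.1.1 q.2)
  · intro d hd
    rw [Finset.mem_sigma]
    constructor
    · rw [Finset.HasAntidiagonal.mem_antidiagonal]
      have := Finset.Nat.mem_antidiagonalTuple.mp hd
      rw [← this, Fin.sum_univ_succ]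
    · exact Finset.Nat.mem_antidiagonalTuple.mpr rfl
  · intro q hq
    rw [Finset.mem_sigma] at hq
    apply Finset.Nat.mem_antidiagonalTuple.mpr
    rw [Fin.sum_univ_succ]
    simp only [Fin.cons_zero, Fin.cons_succ]
    have h1 := Finset.HasAntidiagonal.mem_antidiagonal.mp hq.1
    have h2 := Finset.Nat.mem_antidiagonalTuple.mp hq.2
    rw [h2, h1]
  · intro d _
    exact Fin.cons_self_tail d
  · intro q hq
    rw [Finset.mem_sigma] at hq
    have h2 := Finset.Nat.mem_antidiagonalTuple.mp hq.2
    apply Sigma.ext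
    · simp only [Fin.cons_zero, Fin.cons_succ, h2]
    · simp only [Fin.tail_cons]
      exact heq_of_eq rfl
  · intro d _
    rw [Fin.cons_self_tail]

lemma tuple_sum_zero {m : ℕ} (t : Fin m → ℕ) (h : Fin m → ℕ → ℝ)
    (hh0 : ∀ i a, a < t i → h i a = 0) (N : ℕ) (hN : N < ∑ i, t i) :
    ∑ d ∈ Finset.Nat.antidiagonalTuple m N, ∏ i, h i (d i) = 0 := by
  apply Finset.sum_eq_zero
  intro d hd
  have hdN := Finset.Nat.mem_antidiagonalTuple.mp hd
  have : ∃ i, d i < t i := by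
    by_contra hc
    push_neg at hc
    have := Finset.sum_le_sum (fun i (_ : i ∈ Finset.univ) => hc i)
    omega
  obtain ⟨i, hi⟩ := this
  exact Finset.prod_eq_zero (Finset.mem_univ i) (hh0 i _ hi)

lemma tuple_sum : ∀ (m : ℕ), 0 < m → ∀ (x : Fin m → ℝ), (∀ i, 0 < x i) →
    ∀ (t : Fin m → ℕ) (c : Fin m → ℝ) (h : Fin m → ℕ → ℝ),
    (∀ i a, a < t i → h i a = 0) → (∀ i a, h i (a + t i) = c i * f (x i) a) →
    ∀ N : ℕ, (∑ i, t i) ≤ N →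
    ∑ d ∈ Finset.Nat.antidiagonalTuple m N, ∏ i, h i (d i)
      = (∏ i, c i) * f (∑ i, x i) (N - ∑ i, t i) := by
  intro m
  induction m with
  | zero => omega
  | succ m ih =>
    intro _ x hx t c h hh0 hh N hN
    rcases Nat.eq_zero_or_pos m with hm | hm
    · subst hm
      have hadt : Finset.Nat.antidiagonalTuple (0+1) N = {![N]} := Finset.Nat.antidiagonalTuple_one N
      rw [hadt, Finset.sum_singleton]
      have e1 : ∏ i, h i (![N] i) = h 0 N := by rw [Fin.prod_univ_succ]; simp
      have e2 : (∏ i, c i) = c 0 := by rw [Fin.prod_univ_succ]; simp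
      have e3 : (∑ i, x i) = x 0 := by rw [Fin.sum_univ_succ]; simp
      have e4 : (∑ i, t i) = t 0 := by rw [Fin.sum_univ_succ]; simp
      rw [e1, e2, e3, e4]
      have hNt : N = (N - t 0) + t 0 := by omega
      rw [hNt, hh 0 (N - t 0), Nat.add_sub_cancel]
    · rw [sum_adt_succ (fun d => ∏ i, h i (d i))]
      have hinner : ∀ p ∈ antidiagonal N,
          ∑ e ∈ Finset.Nat.antidiagonalTuple m p.2, ∏ i, h i ((Fin.cons p.1 e : Fin (m+1) → ℕ) i)
          = h 0 p.1 * (if (∑ i : Fin m, t (Fin.succ i)) ≤ p.2 then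
              (∏ i : Fin m, c (Fin.succ i)) *
                f (∑ i : Fin m, x (Fin.succ i)) (p.2 - ∑ i : Fin m, t (Fin.succ i)) else 0) := by
        intro p _
        have hsplit : ∀ e : Fin m → ℕ, ∏ i, h i ((Fin.cons p.1 e : Fin (m+1) → ℕ) i)
            = h 0 p.1 * ∏ i : Fin m, h (Fin.succ i) (e i) := by
          intro e
          rw [Fin.prod_univ_succ]
          simp [Fin.cons_zero, Fin.cons_succ]
        rw [Finset.sum_congr rfl (fun e _ => hsplit e), ← Finset.mul_sum]
        congr 1
        by_cases hc : (∑ i : Fin m, t (Fin.succ i)) ≤ p.2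
        · rw [if_pos hc]
          exact ih hm (fun i => x (Fin.succ i)) (fun i => hx _) (fun i => t (Fin.succ i))
            (fun i => c (Fin.succ i)) (fun i => h (Fin.succ i)) (fun i a ha => hh0 _ a ha)
            (fun i a => hh _ a) p.2 hc
        · rw [if_neg hc]
          exact tuple_sum_zero (fun i => t (Fin.succ i)) (fun i => h (Fin.succ i))
            (fun i a ha => hh0 _ a ha) p.2 (by beta_reduce; omega)
      rw [Finset.sum_congr rfl hinner]
      have hX' : 0 < ∑ i : Fin m, x (Fin.succ i) := by
        have : Nonempty (Fin m) := ⟨⟨0, hm⟩⟩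
        exact Finset.sum_pos (fun i _ => hx _) Finset.univ_nonempty
      set T' := ∑ i : Fin m, t (Fin.succ i)
      set C' := ∏ i : Fin m, c (Fin.succ i)
      set X' := ∑ i : Fin m, x (Fin.succ i)
      have hh0' : ∀ p : ℕ × ℕ, h 0 p.1 = c 0 * (if t 0 ≤ p.1 then f (x 0) (p.1 - t 0) else 0) := by
        intro p
        by_cases hc : t 0 ≤ p.1
        · rw [if_pos hc]
          have : p.1 = (p.1 - t 0) + t 0 := by omega
          rw [this, hh 0 (p.1 - t 0)]
          congr 2
          omega
        · rw [if_neg hc, mul_zero]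
          exact hh0 0 p.1 (by omega)
      have step : ∑ p ∈ antidiagonal N, h 0 p.1 *
            (if T' ≤ p.2 then C' * f X' (p.2 - T') else 0)
          = c 0 * C' * ∑ p ∈ antidiagonal N,
              (if t 0 ≤ p.1 then f (x 0) (p.1 - t 0) else 0) *
              (if T' ≤ p.2 then f X' (p.2 - T') else 0) := by
        rw [Finset.mul_sum]
        apply Finset.sum_congr rfl
        intro p _
        rw [hh0' p]
        by_cases hc : T' ≤ p.2
        · rw [if_pos hc, if_pos hc]; ring
        · rw [if_neg hc, if_neg hc]; ring
      rw [step]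
      have htsum : ∑ i, t i = t 0 + T' := by rw [Fin.sum_univ_succ]
      have hxsum : ∑ i, x i = x 0 + X' := by rw [Fin.sum_univ_succ]
      have hcsum : ∏ i, c i = c 0 * C' := by rw [Fin.prod_univ_succ]
      rw [pair_shift (hx 0) hX' (t 0) T' N (by omega), hcsum, hxsum]
      congr 1
      congr 1
      omega


lemma S_eval {ρ : ℝ} (hρ : 0 < ρ) {n : ℕ} (hn : 0 < n) (N : ℕ) :
    ∑ d ∈ Finset.Nat.antidiagonalTuple n N, ∏ i, f ρ (d i) = f ((n:ℝ) * ρ) N := by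
  have := tuple_sum n hn (fun _ => ρ) (fun _ => hρ) (fun _ => 0) (fun _ => 1)
    (fun _ => f ρ) (fun i a ha => absurd ha (Nat.not_lt_zero a)) (fun i a => by simp)
    N (by simp)
  simpa [Finset.sum_const, Finset.prod_const, nsmul_eq_mul] using this

lemma card_filter_lt {n k : ℕ} (hkn : k ≤ n) :
    (Finset.univ.filter (fun i : Fin n => (i:ℕ) < k)).card = k := by
  have h : (Finset.univ.filter (fun i : Fin n => (i:ℕ) < k))
      = (Finset.univ : Finset (Fin k)).map (Fin.castLEEmb hkn) := by
    ext i
    simp only [Finset.mem_filter, Finset.mem_univ, true_and, Finset.mem_map]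
    constructor
    · intro hi
      refine ⟨⟨(i:ℕ), hi⟩, ?_⟩
      ext
      simp [Fin.castLEEmb]
    · rintro ⟨j, rfl⟩
      simpa [Fin.castLEEmb] using j.2
  rw [h, Finset.card_map, Finset.card_univ, Fintype.card_fin]

lemma T_eval {ρ : ℝ} (hρ : 0 < ρ) {n k : ℕ} (hk : 1 ≤ k) (hkn : k < n) (h0 : 0 < n) :
    ∑ d ∈ Finset.Nat.antidiagonalTuple n n,
      (((d ⟨0, h0⟩ : ℝ) - 1) * ∏ i ∈ Finset.univ.filter (fun i : Fin n => (i:ℕ) < k), (d i : ℝ))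
        * ∏ i, f ρ (d i)
    = ρ ^ k * (1 + ρ) * f ((n:ℝ) * ρ + k + 1) (n - (k+1)) := by
  set i0 : Fin n := ⟨0, h0⟩ with hi0
  have hi0k : ((i0 : ℕ)) < k := hk
  set t : Fin n → ℕ := fun i => (if i = i0 then 1 else 0) + (if (i:ℕ) < k then 1 else 0) with ht
  set c : Fin n → ℝ := fun i => (if i = i0 then ρ+1 else 1) * (if (i:ℕ) < k then ρ else 1) with hc
  set x : Fin n → ℝ :=
    fun i => ρ + (if i = i0 then 1 else 0) + (if (i:ℕ) < k then 1 else 0) with hx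
  set h : Fin n → ℕ → ℝ := fun i a =>
    (if i = i0 then (a:ℝ) - 1 else 1) * ((if (i:ℕ) < k then (a:ℝ) else 1) * f ρ a) with hhdef
  have hti : ∀ i, t i = (if i = i0 then 1 else 0) + (if (i:ℕ) < k then 1 else 0) := fun i => rfl
  have hci : ∀ i, c i = (if i = i0 then ρ+1 else 1) * (if (i:ℕ) < k then ρ else 1) := fun i => rfl
  have hxi : ∀ i, x i = ρ + (if i = i0 then 1 else 0) + (if (i:ℕ) < k then 1 else 0) :=
    fun i => rfl
  have hhi : ∀ i a, h i a
      = (if i = i0 then (a:ℝ) - 1 else 1) * ((if (i:ℕ) < k then (a:ℝ) else 1) * f ρ a) :=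
    fun i a => rfl
  have hxpos : ∀ i, 0 < x i := by
    intro i
    rw [hxi]
    split_ifs <;> linarith
  have hh0 : ∀ i a, a < t i → h i a = 0 := by
    intro i a ha
    rw [hhi]
    by_cases hi : i = i0
    · have hik : (i:ℕ) < k := by rw [hi]; exact hi0k
      rw [hti, if_pos hi, if_pos hik] at ha
      have : a = 0 ∨ a = 1 := by omega
      rcases this with rfl | rfl
      · rw [if_pos hik]
        norm_num
      · rw [if_pos hi]
        norm_num
    · rw [hti, if_neg hi, zero_add] at ha
      by_cases hik : (i:ℕ) < k
      · rw [if_pos hik] at ha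
        have : a = 0 := by omega
        subst this
        rw [if_pos hik]
        norm_num
      · rw [if_neg hik] at ha
        omega
  have hh : ∀ i a, h i (a + t i) = c i * f (x i) a := by
    intro i a
    rw [hhi, hti, hci, hxi]
    by_cases hi : i = i0
    · have hik : (i:ℕ) < k := by rw [hi]; exact hi0k
      simp only [if_pos hi, if_pos hik]
      have hs2 := f_shift2 hρ a
      rw [show a + (1 + 1) = a + 2 by omega, show ρ + 1 + 1 = ρ + 2 by ring]
      push_cast
      linear_combination hs2
    · simp only [if_neg hi]
      by_cases hik : (i:ℕ) < k
      · simp only [if_pos hik]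
        have hs1 := f_shift1 hρ a
        rw [show a + (0 + 1) = a + 1 by omega, show ρ + 0 + 1 = ρ + 1 by ring]
        push_cast
        linear_combination hs1
      · simp only [if_neg hik]
        rw [show a + (0 + 0) = a by omega, show ρ + 0 + 0 = ρ by ring]
        ring
  have hts : ∑ i, t i = 1 + k := by
    rw [show ∑ i, t i = ∑ i : Fin n, ((if i = i0 then 1 else 0) + (if (i:ℕ) < k then 1 else 0))
      from Finset.sum_congr rfl (fun i _ => hti i)]
    rw [Finset.sum_add_distrib]
    congr 1
    · rw [Finset.sum_ite_eq' Finset.univ i0 (fun _ => 1)]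
      simp
    · rw [Finset.sum_boole, card_filter_lt (le_of_lt hkn)]
      exact Nat.cast_id k
  have hxs : ∑ i, x i = (n:ℝ) * ρ + 1 + k := by
    rw [show ∑ i, x i
        = ∑ i : Fin n, (ρ + (if i = i0 then (1:ℝ) else 0) + (if (i:ℕ) < k then (1:ℝ) else 0))
      from Finset.sum_congr rfl (fun i _ => hxi i)]
    rw [Finset.sum_add_distrib, Finset.sum_add_distrib]
    have e1 : ∑ _i : Fin n, ρ = (n:ℝ) * ρ := by
      rw [Finset.sum_const, Finset.card_univ, Fintype.card_fin, nsmul_eq_mul]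
    have e2 : ∑ i : Fin n, (if i = i0 then (1:ℝ) else 0) = 1 := by
      rw [Finset.sum_ite_eq' Finset.univ i0 (fun _ => (1:ℝ))]
      simp
    have e3 : ∑ i : Fin n, (if (i:ℕ) < k then (1:ℝ) else 0) = k := by
      rw [Finset.sum_boole, card_filter_lt (le_of_lt hkn)]
    rw [e1, e2, e3]
  have hcs : ∏ i, c i = (ρ+1) * ρ ^ k := by
    rw [show ∏ i, c i
        = ∏ i : Fin n, ((if i = i0 then ρ+1 else 1) * (if (i:ℕ) < k then ρ else 1))
      from Finset.prod_congr rfl (fun i _ => hci i)]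
    rw [Finset.prod_mul_distrib]
    congr 1
    · rw [Finset.prod_ite_eq' Finset.univ i0 (fun _ => ρ+1)]
      simp
    · rw [← Finset.prod_filter, Finset.prod_const, card_filter_lt (le_of_lt hkn)]
  have key := tuple_sum n h0 x hxpos t c h hh0 hh n (by omega)
  have hint : ∀ d : Fin n → ℕ,
      (((d i0 : ℝ) - 1) * ∏ i ∈ Finset.univ.filter (fun i : Fin n => (i:ℕ) < k), (d i : ℝ))
        * ∏ i, f ρ (d i) = ∏ i, h i (d i) := by
    intro d
    rw [show ∏ i, h i (d i)
        = ∏ i : Fin n, ((if i = i0 then (d i:ℝ) - 1 else 1)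
            * ((if (i:ℕ) < k then (d i:ℝ) else 1) * f ρ (d i)))
      from Finset.prod_congr rfl (fun i _ => hhi i (d i))]
    rw [Finset.prod_mul_distrib, Finset.prod_mul_distrib]
    rw [Finset.prod_ite_eq' Finset.univ i0 (fun i => (d i : ℝ) - 1)]
    rw [← Finset.prod_filter]
    simp only [Finset.mem_univ, if_true]
    ring
  rw [Finset.sum_congr rfl (fun d _ => hint d), key, hts, hxs, hcs]
  rw [show (n:ℝ) * ρ + 1 + (k:ℝ) = (n:ℝ) * ρ + k + 1 by ring, show 1 + k = k + 1 by rw [Nat.add_comm]]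
  ring

lemma Gamma_ratio {x : ℝ} (hx : 0 < x) (m : ℕ) :
    Real.Gamma (x + m) = Real.Gamma x * ∏ j ∈ Finset.range m, (x + j) := by
  induction m with
  | zero => simp
  | succ m ih =>
    have h1 : x + (m+1 : ℕ) = (x + m) + 1 := by push_cast; ring
    rw [h1, Real.Gamma_add_one (by positivity), ih, Finset.prod_range_succ]
    ring

lemma fact_ratio {n : ℕ} : ∀ m, m ≤ n →
    (n.factorial : ℝ) = ((n - m).factorial : ℝ) * ∏ j ∈ Finset.range m, ((n:ℝ) - j) := by
  intro m
  induction m with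
  | zero => simp
  | succ m ih =>
    intro hm
    rw [Finset.prod_range_succ, ih (by omega)]
    have h1 : n - m = (n - (m+1)) + 1 := by omega
    have h2 : ((n - m : ℕ) : ℝ) = (n:ℝ) - m := by
      have : (m:ℝ) ≤ n := by exact_mod_cast le_of_lt (by omega : m < n)
      push_cast [Nat.cast_sub (by omega : m ≤ n)]
      ring
    rw [h1, Nat.factorial_succ]
    push_cast
    rw [show ((n - (m+1) : ℕ) : ℝ) + 1 = (n:ℝ) - m by
      push_cast [Nat.cast_sub (by omega : m + 1 ≤ n)]; ring]
    ring

end Stmt15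

open MeasureTheory ProbabilityTheory
open Stmt15

/-- With the preferential-attachment in-degree distribution (i.i.d. generalized negative
binomial with parameter `ρ`, conditioned to sum to `n`), the number of cyclic vertices
satisfies `Pr{X_n^ρ = k} = (k/(n-k)) E((D̂_1-1) D̂_1 ⋯ D̂_k) = k ρ^k (1+ρ) (n)_k/(nρ+k)_{k+1}`
for `1 ≤ k < n`, and `Pr{X_n^ρ = n} = Pr{D̂_i = 1 ∀ i} = ρ^n n! Γ(nρ)/Γ(n+nρ)`. -/
theorem stmt15 {Ω : Type*} [MeasurableSpace Ω] (μ : Measure Ω) [IsProbabilityMeasure μ]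
    (ρ : ℝ) (hρ : 0 < ρ) (n : ℕ) (hn : 1 ≤ n) (D : Fin n → Ω → ℕ)
    (hmeas : ∀ i, Measurable (D i))
    (hindep : iIndepFun D μ)
    (hdist : ∀ i k, μ {ω | D i ω = k} =
      ENNReal.ofReal (Real.Gamma (k + ρ) / (Nat.factorial k * Real.Gamma ρ) *
        (ρ / (1 + ρ)) ^ ρ * (1 / (1 + ρ)) ^ k)) :
    (∀ k : ℕ, 1 ≤ k → k < n →
      (k : ℝ) / ((n : ℝ) - k) *
          ∫ ω, (((D ⟨0, by omega⟩ ω : ℝ) - 1) *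
              ∏ i ∈ Finset.univ.filter (fun i : Fin n => (i : ℕ) < k), (D i ω : ℝ))
            ∂(μ[|{ω | ∑ i, D i ω = n}])
        = (k : ℝ) * ρ ^ k * (1 + ρ) * (∏ j ∈ Finset.range k, ((n : ℝ) - j)) /
            (∏ j ∈ Finset.range (k + 1), ((n : ℝ) * ρ + k - j))) ∧
    ((μ[|{ω | ∑ i, D i ω = n}] {ω | ∀ i, D i ω = 1}).toReal
      = ρ ^ n * (Nat.factorial n : ℝ) * Real.Gamma (n * ρ) / Real.Gamma (n + n * ρ)) := by
  classical
  have hpos : 0 < n := by omega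
  have hρ1 : (0:ℝ) < 1 + ρ := by linarith
  set p : ℝ := 1 / (1 + ρ) with hp
  set cρ : ℝ := (ρ / (1 + ρ)) ^ ρ with hcρ
  have hppos : 0 < p := by rw [hp]; positivity
  have hcpos : 0 < cρ := Real.rpow_pos_of_pos (by positivity) ρ
  set P : ℕ → ℝ := fun a => f ρ a * cρ * p ^ a with hP
  have hPi : ∀ a, P a = f ρ a * cρ * p ^ a := fun a => rfl
  have hPnonneg : ∀ a, 0 ≤ P a := by
    intro a
    have := f_pos hρ a
    rw [hPi]
    positivity
  have hdist' : ∀ i a, μ {ω | D i ω = a} = ENNReal.ofReal (P a) := by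
    intro i a
    rw [hdist i a]
    rfl
  set S : Set Ω := {ω | ∑ i, D i ω = n} with hS
  have hSmeas : MeasurableSet S := by
    have hm : Measurable fun ω => ∑ i, D i ω :=
      Finset.measurable_sum Finset.univ (fun i _ => hmeas i)
    exact hm (measurableSet_singleton n)
  set A : (Fin n → ℕ) → Set Ω := fun d => ⋂ i, {ω | D i ω = d i} with hA
  have hAi : ∀ d, A d = ⋂ i, {ω | D i ω = d i} := fun d => rfl
  have hAmeas : ∀ d, MeasurableSet (A d) := fun d =>
    MeasurableSet.iInter (fun i => (hmeas i) (measurableSet_singleton (d i)))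
  have hAmem : ∀ d (ω : Ω), ω ∈ A d ↔ ∀ i, D i ω = d i := by
    intro d ω
    rw [hAi]
    simp only [Set.mem_iInter, Set.mem_setOf_eq]
  have hAmu : ∀ d : Fin n → ℕ, μ (A d) = ENNReal.ofReal (∏ i, P (d i)) := by
    intro d
    have hiter := hindep.meas_iInter (s := fun i => {ω | D i ω = d i})
      (fun i => ⟨{d i}, measurableSet_singleton _, rfl⟩)
    calc μ (A d) = ∏ i, μ {ω | D i ω = d i} := hiter
      _ = ∏ i, ENNReal.ofReal (P (d i)) :=
        Finset.prod_congr rfl (fun i _ => hdist' i (d i))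
      _ = ENNReal.ofReal (∏ i, P (d i)) :=
        (ENNReal.ofReal_prod_of_nonneg (fun i _ => hPnonneg (d i))).symm
  set F : Finset (Fin n → ℕ) := Finset.Nat.antidiagonalTuple n n with hF
  have hSdecomp : S = ⋃ d ∈ F, A d := by
    ext ω
    simp only [Set.mem_iUnion, exists_prop]
    constructor
    · intro hω
      refine ⟨fun i => D i ω, ?_, ?_⟩
      · exact Finset.Nat.mem_antidiagonalTuple.mpr hω
      · exact (hAmem _ ω).mpr (fun i => rfl)
    · rintro ⟨d, hd, hdi⟩
      have hsum := Finset.Nat.mem_antidiagonalTuple.mp hd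
      have hDi := (hAmem d ω).mp hdi
      show ∑ i, D i ω = n
      calc ∑ i, D i ω = ∑ i, d i := Finset.sum_congr rfl (fun i _ => hDi i)
        _ = n := hsum
  have hdisj : Set.Pairwise ↑F (Function.onFun Disjoint A) := by
    intro d _ e _ hde
    refine Set.disjoint_left.mpr ?_
    intro ω hωd hωe
    apply hde
    funext i
    rw [← (hAmem d ω).mp hωd i, ← (hAmem e ω).mp hωe i]
  have hPd : ∀ d ∈ F, ∏ i, P (d i) = (∏ i, f ρ (d i)) * (cρ ^ n * p ^ n) := by
    intro d hd
    have hsum := Finset.Nat.mem_antidiagonalTuple.mp hd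
    calc ∏ i, P (d i) = ∏ i, (f ρ (d i) * cρ * p ^ (d i)) :=
        Finset.prod_congr rfl (fun i _ => hPi (d i))
      _ = ((∏ i, f ρ (d i)) * ∏ _i : Fin n, cρ) * ∏ i, p ^ (d i) := by
        rw [Finset.prod_mul_distrib, Finset.prod_mul_distrib]
      _ = (∏ i, f ρ (d i)) * (cρ ^ n * p ^ n) := by
        rw [Finset.prod_const, Finset.card_univ, Fintype.card_fin,
          Finset.prod_pow_eq_pow_sum, hsum]
        ring
  have hnρ : (0:ℝ) < (n:ℝ) * ρ := by
    have : (0:ℝ) < (n:ℝ) := by exact_mod_cast hpos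
    positivity
  have hfZ : 0 < f ((n:ℝ) * ρ) n := f_pos hnρ n
  set Z : ℝ := cρ ^ n * p ^ n * f ((n:ℝ) * ρ) n with hZ
  have hZpos : 0 < Z := by rw [hZ]; positivity
  have hmuS : μ S = ENNReal.ofReal Z := by
    rw [hSdecomp, measure_biUnion_finset hdisj (fun d _ => hAmeas d)]
    rw [Finset.sum_congr rfl (fun d _ => hAmu d)]
    rw [← ENNReal.ofReal_sum_of_nonneg
      (fun d _ => Finset.prod_nonneg (fun i _ => hPnonneg (d i)))]
    congr 1
    rw [Finset.sum_congr rfl hPd, ← Finset.sum_mul, S_eval hρ hpos n]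
    rw [hZ]
    ring
  constructor
  · -- Part 1
    intro k hk hkn
    show (k : ℝ) / ((n : ℝ) - k) *
          ∫ ω, (((D ⟨0, hpos⟩ ω : ℝ) - 1) *
              ∏ i ∈ Finset.univ.filter (fun i : Fin n => (i : ℕ) < k), (D i ω : ℝ))
            ∂(μ[|S])
        = (k : ℝ) * ρ ^ k * (1 + ρ) * (∏ j ∈ Finset.range k, ((n : ℝ) - j)) /
            (∏ j ∈ Finset.range (k + 1), ((n : ℝ) * ρ + k - j))
    set G : (Fin n → ℕ) → ℝ := fun d => ((d ⟨0, hpos⟩ : ℝ) - 1) *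
      ∏ i ∈ Finset.univ.filter (fun i : Fin n => (i : ℕ) < k), (d i : ℝ) with hGdef
    have hGi : ∀ d, G d = ((d ⟨0, hpos⟩ : ℝ) - 1) *
        ∏ i ∈ Finset.univ.filter (fun i : Fin n => (i : ℕ) < k), (d i : ℝ) := fun d => rfl
    have hgconst : ∀ d : Fin n → ℕ, Set.EqOn
        (fun ω => ((D ⟨0, hpos⟩ ω : ℝ) - 1) *
          ∏ i ∈ Finset.univ.filter (fun i : Fin n => (i : ℕ) < k), (D i ω : ℝ))
        (fun _ => G d) (A d) := by
      intro d ω hω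
      have hDi := (hAmem d ω).mp hω
      rw [hGi]
      simp only [hDi]
    have hIntA : ∀ d ∈ F, IntegrableOn
        (fun ω => ((D ⟨0, hpos⟩ ω : ℝ) - 1) *
          ∏ i ∈ Finset.univ.filter (fun i : Fin n => (i : ℕ) < k), (D i ω : ℝ))
        (A d) μ := by
      intro d _
      have hc : IntegrableOn (fun _ : Ω => G d) (A d) μ :=
        integrableOn_const (measure_lt_top μ (A d)).ne
      exact hc.congr_fun (fun ω hω => (hgconst d hω).symm) (hAmeas d)
    have hsetint : ∀ d ∈ F, ∫ ω in A d,
        (((D ⟨0, hpos⟩ ω : ℝ) - 1) *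
          ∏ i ∈ Finset.univ.filter (fun i : Fin n => (i : ℕ) < k), (D i ω : ℝ)) ∂μ
        = G d * ∏ i, P (d i) := by
      intro d _
      rw [setIntegral_congr_fun (hAmeas d) (hgconst d), setIntegral_const, measureReal_def,
        hAmu d, ENNReal.toReal_ofReal (Finset.prod_nonneg (fun i _ => hPnonneg (d i))),
        smul_eq_mul]
      ring
    have hTe : ∑ d ∈ F, G d * ∏ i, f ρ (d i)
        = ρ ^ k * (1 + ρ) * f ((n:ℝ) * ρ + k + 1) (n - (k+1)) :=
      T_eval hρ hk hkn hpos
    have hI : ∫ ω, (((D ⟨0, hpos⟩ ω : ℝ) - 1) *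
          ∏ i ∈ Finset.univ.filter (fun i : Fin n => (i : ℕ) < k), (D i ω : ℝ)) ∂(μ[|S])
        = Z⁻¹ * (cρ ^ n * p ^ n *
            (ρ ^ k * (1 + ρ) * f ((n:ℝ) * ρ + k + 1) (n - (k+1)))) := by
      have hcond : μ[|S] = (μ S)⁻¹ • μ.restrict S := rfl
      rw [hcond, integral_smul_measure]
      have hres : ∫ ω in S, (((D ⟨0, hpos⟩ ω : ℝ) - 1) *
            ∏ i ∈ Finset.univ.filter (fun i : Fin n => (i : ℕ) < k), (D i ω : ℝ)) ∂μ
          = ∑ d ∈ F, G d * ∏ i, P (d i) := by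
        rw [hSdecomp, integral_biUnion_finset F (fun d _ => hAmeas d) hdisj hIntA]
        exact Finset.sum_congr rfl hsetint
      rw [hres, hmuS, smul_eq_mul, ENNReal.toReal_inv, ENNReal.toReal_ofReal hZpos.le]
      congr 1
      rw [← hTe, Finset.mul_sum]
      apply Finset.sum_congr rfl
      intro d hd
      rw [hPd d hd]
      ring
    rw [hI]
    -- final algebra
    have hkn1 : k + 1 ≤ n := by omega
    have hcastsub : ((n - (k+1) : ℕ) : ℝ) = (n:ℝ) - k - 1 := by
      push_cast [Nat.cast_sub hkn1]
      ring
    have hfnum : f ((n:ℝ) * ρ + k + 1) (n - (k+1))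
        = Real.Gamma ((n:ℝ) + (n:ℝ) * ρ) /
            (((n - (k+1) : ℕ).factorial : ℝ) * Real.Gamma ((n:ℝ) * ρ + k + 1)) := by
      unfold f
      congr 2
      rw [hcastsub]
      ring
    have hGamden : Real.Gamma ((n:ℝ) * ρ + k + 1)
        = Real.Gamma ((n:ℝ) * ρ) * ∏ j ∈ Finset.range (k+1), ((n:ℝ) * ρ + j) := by
      have := Gamma_ratio hnρ (k+1)
      rw [show (n:ℝ) * ρ + ((k+1 : ℕ) : ℝ) = (n:ℝ) * ρ + k + 1 by push_cast; ring] at this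
      exact this
    have hfden : f ((n:ℝ) * ρ) n
        = Real.Gamma ((n:ℝ) + (n:ℝ) * ρ) / ((n.factorial : ℝ) * Real.Gamma ((n:ℝ) * ρ)) := rfl
    have hfact : (n.factorial : ℝ)
        = ((n - (k+1) : ℕ).factorial : ℝ) * ∏ j ∈ Finset.range (k+1), ((n:ℝ) - j) :=
      fact_ratio (k+1) hkn1
    have hrefl : ∏ j ∈ Finset.range (k + 1), ((n : ℝ) * ρ + k - j)
        = ∏ j ∈ Finset.range (k + 1), ((n:ℝ) * ρ + j) := by
      rw [← Finset.prod_range_reflect (fun j => (n:ℝ) * ρ + j) (k+1)]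
      apply Finset.prod_congr rfl
      intro j hj
      have hjk : j ≤ k := by
        have := Finset.mem_range.mp hj
        omega
      show (n:ℝ) * ρ + ↑k - ↑j = (n:ℝ) * ρ + ↑(k + 1 - 1 - j)
      rw [show k + 1 - 1 - j = k - j by omega, Nat.cast_sub hjk]
      ring
    have hsplit : ∏ j ∈ Finset.range (k+1), ((n:ℝ) - j)
        = (∏ j ∈ Finset.range k, ((n:ℝ) - j)) * ((n:ℝ) - k) := by
      rw [Finset.prod_range_succ]
    have hGpos1 : 0 < Real.Gamma ((n:ℝ) + (n:ℝ) * ρ) :=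
      Real.Gamma_pos_of_pos (by positivity)
    have hGpos2 : 0 < Real.Gamma ((n:ℝ) * ρ) := Real.Gamma_pos_of_pos hnρ
    have hprodpos : 0 < ∏ j ∈ Finset.range (k+1), ((n:ℝ) * ρ + j) := by
      apply Finset.prod_pos
      intro j _
      positivity
    have hfacpos : (0:ℝ) < ((n - (k+1) : ℕ).factorial : ℝ) := by positivity
    have hnk : (0:ℝ) < (n:ℝ) - k := by
      have h1 : (k:ℝ) < (n:ℝ) := by exact_mod_cast hkn
      linarith
    rw [hfnum, hZ, hfden, hrefl, hGamden]
    rw [hfact, hsplit]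
    field_simp
  · -- Part 2
    have hE1 : {ω | ∀ i, D i ω = 1} = A (fun _ => 1) := by
      ext ω
      rw [hAmem]
      simp only [Set.mem_setOf_eq]
    have hsub : A (fun _ => 1) ⊆ S := by
      intro ω hω
      have hDi := (hAmem _ ω).mp hω
      show ∑ i, D i ω = n
      rw [Finset.sum_congr rfl (fun i _ => hDi i), Finset.sum_const, Finset.card_univ,
        Fintype.card_fin, smul_eq_mul, mul_one]
    rw [ProbabilityTheory.cond_apply hSmeas μ]
    rw [hE1, Set.inter_eq_self_of_subset_right hsub]
    rw [hAmu, hmuS]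
    have hP1 : P 1 = ρ * cρ * p := by
      rw [hPi, f_one hρ, pow_one]
    have hprod1 : ∏ _i : Fin n, P 1 = (ρ * cρ * p) ^ n := by
      rw [Finset.prod_const, Finset.card_univ, Fintype.card_fin, hP1]
    rw [hprod1]
    rw [ENNReal.toReal_mul, ENNReal.toReal_inv, ENNReal.toReal_ofReal hZpos.le,
      ENNReal.toReal_ofReal (by positivity)]
    rw [hZ]
    have hfden : f ((n:ℝ) * ρ) n
        = Real.Gamma ((n:ℝ) + (n:ℝ) * ρ) / ((n.factorial : ℝ) * Real.Gamma ((n:ℝ) * ρ)) := rfl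
    rw [hfden, mul_pow, mul_pow]
    have hGpos1 : 0 < Real.Gamma ((n:ℝ) + (n:ℝ) * ρ) :=
      Real.Gamma_pos_of_pos (by positivity)
    have hGpos2 : 0 < Real.Gamma ((n:ℝ) * ρ) := Real.Gamma_pos_of_pos hnρ
    field_simp
end

section
/- With the anti-preferential attachment in-degree distribution (i.i.d. Bin(m,1/m) conditioned to sum to n, m ≥ 2), the number of cyclic vertices satisfies Pr{X_n^m = k} = (k/(n-k))·m^k·(m-1)·C(nm-k-1, n-k-1)/C(nm, n) for 1 ≤ k < n, and Pr{X_n^m = n} = m^n/C(nm, n). -/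
open MeasureTheory ProbabilityTheory Polynomial Finset

namespace Stmt16Aux

noncomputable def g2 (m : ℕ) : Polynomial ℝ := (X + 1) ^ m
noncomputable def g1 (m : ℕ) : Polynomial ℝ := X * derivative (g2 m)
noncomputable def g0 (m : ℕ) : Polynomial ℝ := X ^ 2 * derivative (derivative (g2 m))

lemma coeff_g2 (m d : ℕ) : (g2 m).coeff d = (m.choose d : ℝ) := by
  simp [g2, coeff_X_add_one_pow]

lemma coeff_g1 (m d : ℕ) : (g1 m).coeff d = (d : ℝ) * (m.choose d : ℝ) := by
  cases d with
  | zero => simp [g1]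
  | succ e =>
    rw [g1, coeff_X_mul, coeff_derivative, coeff_g2]
    push_cast; ring

lemma coeff_g0 (m d : ℕ) :
    (g0 m).coeff d = ((d : ℝ) - 1) * (d : ℝ) * (m.choose d : ℝ) := by
  match d with
  | 0 => simp [g0, coeff_X_pow_mul']
  | 1 => simp [g0, coeff_X_pow_mul']
  | (e+2) =>
    have h : e + 2 = e + 2 := rfl
    rw [g0, show e + 2 = e + 2 from rfl, coeff_X_pow_mul (d := e),
      coeff_derivative, coeff_derivative, coeff_g2]
    push_cast; ring

lemma g1_eq (m : ℕ) : g1 m = C (m : ℝ) * (X * (X + 1) ^ (m - 1)) := by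
  rw [g1, g2, derivative_pow]
  simp; ring

lemma g0_eq (m : ℕ) (hm : 2 ≤ m) :
    g0 m = C ((m : ℝ) * ((m : ℝ) - 1)) * (X ^ 2 * (X + 1) ^ (m - 2)) := by
  have h1 : derivative (g2 m) = C (m : ℝ) * (X + 1) ^ (m - 1) := by
    rw [g2, derivative_pow]; simp
  have h2 : ((m - 1 : ℕ) : ℝ) = (m : ℝ) - 1 := by
    have : 1 ≤ m := by omega
    push_cast [this]; ring
  have h3 : m - 1 - 1 = m - 2 := by omega
  rw [g0, h1, derivative_mul, derivative_C, derivative_pow, h2, h3]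
  simp; ring

lemma coeff_prod' {ι : Type*} [DecidableEq ι] (s : Finset ι) (f : ι → Polynomial ℝ) (d : ℕ) :
    (∏ i ∈ s, f i).coeff d = ∑ l ∈ Finset.finsuppAntidiag s d, ∏ i ∈ s, (f i).coeff (l i) := by
  have hcoe : ((∏ i ∈ s, f i : Polynomial ℝ) : PowerSeries ℝ)
      = ∏ i ∈ s, ((f i : Polynomial ℝ) : PowerSeries ℝ) := by
    exact map_prod (Polynomial.coeToPowerSeries.ringHom (R := ℝ)) f s
  rw [← Polynomial.coeff_coe, hcoe, PowerSeries.coeff_prod]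
  exact Finset.sum_congr rfl fun l _ => Finset.prod_congr rfl fun i _ =>
    Polynomial.coeff_coe _ _

lemma sum_choose_eq (m n : ℕ) :
    ∑ l ∈ Finset.finsuppAntidiag (univ : Finset (Fin n)) n,
      ∏ i, ((m.choose (l i)) : ℝ) = ((n * m).choose n : ℝ) := by
  have h := coeff_prod' (univ : Finset (Fin n)) (fun _ => g2 m) n
  have hpow : (∏ _i : Fin n, g2 m) = (X + 1) ^ (n * m) := by
    rw [Finset.prod_const, g2, ← pow_mul]
    congr 1
    simp [Nat.mul_comm]
  rw [hpow, coeff_X_add_one_pow] at h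
  simp only [coeff_g2] at h
  exact h.symm

end Stmt16Aux

namespace Stmt16Aux

lemma sum_weight (m n k : ℕ) (hm : 2 ≤ m) (hk : 1 ≤ k) (hkn : k < n) :
    ∑ l ∈ Finset.finsuppAntidiag (univ : Finset (Fin n)) n,
      ((((l ⟨0, by omega⟩) : ℝ) - 1)
        * (∏ i ∈ univ.filter (fun i : Fin n => (i : ℕ) < k), ((l i) : ℝ))
        * ∏ i, ((m.choose (l i)) : ℝ))
    = (m : ℝ) ^ k * ((m : ℝ) - 1) * ((n * m - k - 1).choose (n - k - 1) : ℝ) := by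
  have hn0 : 0 < n := by omega
  set i₀ : Fin n := ⟨0, hn0⟩ with hi₀
  set s : Finset (Fin n) := univ.filter (fun i : Fin n => (i : ℕ) < k) with hs
  set f : Fin n → Polynomial ℝ :=
    fun i => if (i : ℕ) = 0 then g0 m else if (i : ℕ) < k then g1 m else g2 m with hf
  have hi₀s : i₀ ∈ s := by simp [hs, hi₀]; omega
  have hcards : s.card = k := by
    have hsm : s = Finset.map ⟨Fin.castLE hkn.le, Fin.castLE_injective hkn.le⟩ univ := by
      ext i
      simp only [hs, mem_filter, mem_univ, true_and, Finset.mem_map,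
        Function.Embedding.coeFn_mk]
      constructor
      · intro hik
        exact ⟨⟨(i : ℕ), hik⟩, rfl⟩
      · rintro ⟨j, -, rfl⟩
        exact j.isLt
    rw [hsm, Finset.card_map, Finset.card_univ, Fintype.card_fin]
  have hcardsc : (univ.filter (fun i : Fin n => ¬ (i : ℕ) < k)).card = n - k := by
    have h := Finset.card_filter_add_card_filter_not
      (s := (univ : Finset (Fin n))) (p := fun i : Fin n => (i : ℕ) < k)
    rw [Finset.card_univ, Fintype.card_fin] at h
    rw [← hs] at h
    omega
  -- values of f
  have hf0 : f i₀ = g0 m := by simp [hf, hi₀]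
  have hf1 : ∀ i ∈ s.erase i₀, f i = g1 m := by
    intro i hi
    rw [Finset.mem_erase] at hi
    have h1 : (i : ℕ) < k := by
      have := hi.2; rw [hs, mem_filter] at this; exact this.2
    have h2 : (i : ℕ) ≠ 0 := by
      intro h0
      exact hi.1 (Fin.ext (by simp [hi₀, h0]))
    simp [hf, h2, h1]
  have hf2 : ∀ i ∈ univ.filter (fun i : Fin n => ¬ (i : ℕ) < k), f i = g2 m := by
    intro i hi
    rw [mem_filter] at hi
    have h1 : ¬ (i : ℕ) < k := hi.2
    have h2 : (i : ℕ) ≠ 0 := by omega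
    simp [hf, h2, h1]
  -- product of the f's
  have hprodf : ∏ i, f i = g0 m * (g1 m ^ (k - 1) * g2 m ^ (n - k)) := by
    rw [← Finset.prod_filter_mul_prod_filter_not univ (fun i : Fin n => (i : ℕ) < k) f]
    rw [← hs]
    rw [← Finset.mul_prod_erase s f hi₀s, hf0,
      Finset.prod_congr rfl hf1, Finset.prod_const,
      Finset.card_erase_of_mem hi₀s, hcards,
      Finset.prod_congr rfl hf2, Finset.prod_const, hcardsc, mul_assoc]
  -- per-term identity
  have hterm : ∀ l : Fin n →₀ ℕ,
      (((l i₀) : ℝ) - 1) * (∏ i ∈ s, ((l i) : ℝ)) * (∏ i, ((m.choose (l i)) : ℝ))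
      = ∏ i, (f i).coeff (l i) := by
    intro l
    rw [← Finset.prod_filter_mul_prod_filter_not univ (fun i : Fin n => (i : ℕ) < k)
      (fun i => (f i).coeff (l i)), ← hs]
    rw [← Finset.prod_filter_mul_prod_filter_not univ (fun i : Fin n => (i : ℕ) < k)
      (fun i => ((m.choose (l i)) : ℝ)), ← hs]
    have hB : ∏ i ∈ univ.filter (fun i : Fin n => ¬ (i : ℕ) < k), (f i).coeff (l i)
        = ∏ i ∈ univ.filter (fun i : Fin n => ¬ (i : ℕ) < k), ((m.choose (l i)) : ℝ) :=
      Finset.prod_congr rfl fun i hi => by rw [hf2 i hi, coeff_g2]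
    have hA : ∏ i ∈ s, (f i).coeff (l i)
        = (((l i₀) : ℝ) - 1) * (∏ i ∈ s, ((l i) : ℝ)) * ∏ i ∈ s, ((m.choose (l i)) : ℝ) := by
      rw [← Finset.mul_prod_erase s (fun i => (f i).coeff (l i)) hi₀s,
        ← Finset.mul_prod_erase s (fun i => ((l i) : ℝ)) hi₀s,
        ← Finset.mul_prod_erase s (fun i => ((m.choose (l i)) : ℝ)) hi₀s]
      have h0 : (f i₀).coeff (l i₀)
          = (((l i₀) : ℝ) - 1) * ((l i₀) : ℝ) * ((m.choose (l i₀)) : ℝ) := by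
        rw [hf0, coeff_g0]
      have h1 : ∏ i ∈ s.erase i₀, (f i).coeff (l i)
          = ∏ i ∈ s.erase i₀, (((l i) : ℝ) * ((m.choose (l i)) : ℝ)) :=
        Finset.prod_congr rfl fun i hi => by rw [hf1 i hi, coeff_g1]
      rw [h0, h1, Finset.prod_mul_distrib]
      ring
    rw [hA, hB]
    ring
  -- put everything together
  have hsum := coeff_prod' (univ : Finset (Fin n)) f n
  rw [hprodf] at hsum
  have hmain : ∑ l ∈ Finset.finsuppAntidiag (univ : Finset (Fin n)) n,
      ((((l i₀) : ℝ) - 1) * (∏ i ∈ s, ((l i) : ℝ)) * (∏ i, ((m.choose (l i)) : ℝ)))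
      = (g0 m * (g1 m ^ (k - 1) * g2 m ^ (n - k))).coeff n := by
    rw [hsum]
    exact Finset.sum_congr rfl fun l _ => hterm l
  rw [hmain]
  -- now compute the coefficient of the explicit polynomial
  clear hmain hsum hterm hprodf hf2 hf1 hf0 hcardsc hcards hi₀s hf hs hi₀
  obtain ⟨a, rfl⟩ : ∃ a, m = a + 2 := ⟨m - 2, by omega⟩
  obtain ⟨b, rfl⟩ : ∃ b, k = b + 1 := ⟨k - 1, by omega⟩
  obtain ⟨c, rfl⟩ : ∃ c, n = b + c + 2 := ⟨n - b - 2, by omega⟩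
  have hE : (b + c + 2) * (a + 2) - (b + 1) - 1 = a + ((a + 1) * b + (a + 2) * (c + 1)) := by
    have h : (b + c + 2) * (a + 2) = (a + ((a + 1) * b + (a + 2) * (c + 1))) + (b + 1) + 1 := by
      ring
    rw [h]
    generalize a + ((a + 1) * b + (a + 2) * (c + 1)) = E
    omega
  have e1 : (b + 1) - 1 = b := by omega
  have e2 : (b + c + 2) - (b + 1) = c + 1 := by omega
  have e5 : (b + c + 2) - (b + 1) - 1 = c := by omega
  rw [g0_eq _ (by omega), g1_eq, g2, e1, e5, e2, hE]
  have hpoly : C ((((a : ℕ) + 2 : ℕ) : ℝ) * ((((a : ℕ) + 2 : ℕ) : ℝ) - 1)) *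
        (X ^ 2 * (X + 1) ^ (a + 2 - 2)) *
        ((C (((a : ℕ) + 2 : ℕ) : ℝ) * (X * (X + 1) ^ (a + 2 - 1))) ^ b *
          ((X + 1) ^ (a + 2)) ^ (c + 1))
      = C (((((a : ℕ) + 2 : ℕ) : ℝ) * ((((a : ℕ) + 2 : ℕ) : ℝ) - 1)) * ((((a : ℕ) + 2 : ℕ) : ℝ)) ^ b) *
        (X ^ (b + 2) * (X + 1) ^ (a + ((a + 1) * b + (a + 2) * (c + 1)))) := by
    have e3 : a + 2 - 1 = a + 1 := by omega
    have e4 : a + 2 - 2 = a := by omega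
    rw [e3, e4, mul_pow, mul_pow, ← pow_mul, ← pow_mul]
    simp only [C_mul, C_pow]
    rw [pow_add ((X : Polynomial ℝ) + 1) a ((a + 1) * b + (a + 2) * (c + 1)),
      pow_add ((X : Polynomial ℝ) + 1) ((a + 1) * b) ((a + 2) * (c + 1))]
    ring
  rw [hpoly, coeff_C_mul, show b + c + 2 = c + (b + 2) from by omega,
    coeff_X_pow_mul, coeff_X_add_one_pow]
  push_cast
  ring

end Stmt16Aux

open Stmt16Aux

/-- With the anti-preferential-attachment in-degree distribution (i.i.d. `Bin(m, 1/m)`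
conditioned to sum to `n`, `m ≥ 2`), the number of cyclic vertices satisfies
`Pr{X_n^m = k} = (k/(n-k)) E((D̂_1-1) D̂_1 ⋯ D̂_k) = (k/(n-k)) m^k (m-1) C(nm-k-1, n-k-1)/C(nm, n)`
for `1 ≤ k < n`, and `Pr{X_n^m = n} = Pr{D̂_i = 1 ∀ i} = m^n / C(nm, n)`. -/
theorem stmt16 {Ω : Type*} [MeasurableSpace Ω] (μ : Measure Ω) [IsProbabilityMeasure μ]
    (m : ℕ) (hm : 2 ≤ m) (n : ℕ) (hn : 1 ≤ n) (D : Fin n → Ω → ℕ)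
    (hmeas : ∀ i, Measurable (D i))
    (hindep : iIndepFun D μ)
    (hdist : ∀ i k, μ {ω | D i ω = k} =
      ENNReal.ofReal ((m.choose k : ℝ) * (1 / m : ℝ) ^ k * (1 - 1 / m : ℝ) ^ (m - k))) :
    (∀ k : ℕ, 1 ≤ k → k < n →
      (k : ℝ) / ((n : ℝ) - k) *
          ∫ ω, (((D ⟨0, by omega⟩ ω : ℝ) - 1) *
              ∏ i ∈ Finset.univ.filter (fun i : Fin n => (i : ℕ) < k), (D i ω : ℝ))
            ∂(μ[|{ω | ∑ i, D i ω = n}])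
        = (k : ℝ) / ((n : ℝ) - k) * (m : ℝ) ^ k * ((m : ℝ) - 1) *
            ((n * m - k - 1).choose (n - k - 1) : ℝ) / ((n * m).choose n : ℝ)) ∧
    ((μ[|{ω | ∑ i, D i ω = n}] {ω | ∀ i, D i ω = 1}).toReal
      = (m : ℝ) ^ n / ((n * m).choose n : ℝ)) := by
  classical
  have hm1 : (1 : ℝ) < (m : ℝ) := by exact_mod_cast (by omega : 1 < m)
  set p : ℝ := 1 / m with hp
  set q : ℝ := 1 - 1 / m with hq
  have hppos : 0 < p := by rw [hp]; positivity
  have hqpos : 0 < q := by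
    rw [hq, sub_pos, div_lt_one (by linarith)]
    exact hm1
  set P : ℕ → ℝ := fun j => (m.choose j : ℝ) * p ^ j * q ^ (m - j) with hP
  have hPnn : ∀ j, 0 ≤ P j := fun j => by
    rw [hP]; positivity
  set A : Set Ω := {ω | ∑ i, D i ω = n} with hA
  set B : (Fin n →₀ ℕ) → Set Ω := fun d => ⋂ i, D i ⁻¹' {d i} with hB
  have hmB : ∀ d, MeasurableSet (B d) := fun d =>
    MeasurableSet.iInter fun i => (hmeas i) (measurableSet_singleton _)
  have hμB : ∀ d, μ (B d) = ENNReal.ofReal (∏ i, P (d i)) := by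
    intro d
    have h := hindep.measure_inter_preimage_eq_mul (univ : Finset (Fin n))
      (sets := fun i => {d i}) (fun i _ => measurableSet_singleton _)
    have hBeq : B d = ⋂ i ∈ (univ : Finset (Fin n)), D i ⁻¹' {d i} := by
      simp [hB]
    rw [hBeq, h, ENNReal.ofReal_prod_of_nonneg (fun i _ => hPnn (d i))]
    refine Finset.prod_congr rfl fun i _ => ?_
    have hpre : D i ⁻¹' {d i} = {ω | D i ω = d i} := by ext ω; simp
    rw [hpre, hdist i (d i)]
  set T : Finset (Fin n →₀ ℕ) := Finset.finsuppAntidiag (univ : Finset (Fin n)) n with hT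
  have hAU : A = ⋃ d ∈ T, B d := by
    ext ω
    simp only [hA, Set.mem_setOf_eq, Set.mem_iUnion, hB, Set.mem_iInter, Set.mem_preimage,
      Set.mem_singleton_iff, exists_prop]
    constructor
    · intro hω
      refine ⟨Finsupp.equivFunOnFinite.symm (fun i => D i ω), ?_, fun i => by simp⟩
      rw [hT, Finset.mem_finsuppAntidiag]
      refine ⟨?_, Finset.subset_univ _⟩
      simpa using hω
    · rintro ⟨d, hdT, hd⟩
      rw [hT, Finset.mem_finsuppAntidiag] at hdT
      rw [Finset.sum_congr rfl (fun i _ => hd i)]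
      exact hdT.1
  have hdisj : (↑T : Set (Fin n →₀ ℕ)).PairwiseDisjoint B := by
    intro d1 _ d2 _ hne
    simp only [Function.onFun]
    rw [Set.disjoint_left]
    intro ω h1 h2
    apply hne
    ext i
    simp only [hB, Set.mem_iInter, Set.mem_preimage, Set.mem_singleton_iff] at h1 h2
    rw [← h1 i, ← h2 i]
  have hmA : MeasurableSet A := by
    rw [hAU]; exact T.measurableSet_biUnion fun d _ => hmB d
  have hsumP : ∀ d ∈ T, (∏ i, P (d i))
      = (∏ i, (m.choose (d i) : ℝ)) * (p ^ n * q ^ (n * m - n)) := by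
    intro d hd
    rw [hT, Finset.mem_finsuppAntidiag] at hd
    have hsum : ∑ i, d i = n := hd.1
    by_cases hle : ∀ i, d i ≤ m
    · have h1 : ∏ i, P (d i)
          = (∏ i, (m.choose (d i) : ℝ)) * ((∏ i, p ^ (d i)) * ∏ i, q ^ (m - d i)) := by
        simp only [hP]
        rw [Finset.prod_mul_distrib, Finset.prod_mul_distrib, mul_assoc]
      have h2 : (∑ i : Fin n, (m - d i)) + n = n * m := by
        have h2' : (∑ i : Fin n, (m - d i)) + (∑ i : Fin n, d i) = n * m := by
          rw [← Finset.sum_add_distrib,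
            Finset.sum_congr rfl (fun i _ => Nat.sub_add_cancel (hle i))]
          simp [Finset.sum_const, Finset.card_univ, Nat.mul_comm]
        rw [hsum] at h2'
        exact h2'
      have h3 : ∑ i : Fin n, (m - d i) = n * m - n := by
        generalize hM : n * m = M at h2 ⊢
        omega
      rw [h1, Finset.prod_pow_eq_pow_sum, Finset.prod_pow_eq_pow_sum, hsum, h3]
    · push_neg at hle
      obtain ⟨i, hi⟩ := hle
      have hz : (m.choose (d i) : ℝ) = 0 := by
        exact_mod_cast congrArg (Nat.cast : ℕ → ℝ) (Nat.choose_eq_zero_of_lt hi)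
      rw [Finset.prod_eq_zero (Finset.mem_univ i)
          (by rw [hP]; simp only []; rw [hz]; ring),
        Finset.prod_eq_zero (Finset.mem_univ i) hz, zero_mul]
  have hμA : μ A = ENNReal.ofReal (((n * m).choose n : ℝ) * (p ^ n * q ^ (n * m - n))) := by
    rw [hAU, measure_biUnion_finset hdisj (fun d _ => hmB d)]
    rw [Finset.sum_congr rfl (fun d hd => by rw [hμB d, hsumP d hd])]
    rw [← ENNReal.ofReal_sum_of_nonneg (fun d _ => by positivity)]
    rw [← Finset.sum_mul, hT, sum_choose_eq]
  have hCpos : 0 < ((n * m).choose n : ℝ) := by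
    exact_mod_cast Nat.choose_pos (Nat.le_mul_of_pos_right n (by omega))
  have hRpos : 0 < ((n * m).choose n : ℝ) * (p ^ n * q ^ (n * m - n)) := by positivity
  constructor
  · -- part 1
    intro k hk hkn
    have hn0 : 0 < n := by omega
    have i₀eq : (⟨0, by omega⟩ : Fin n) = (⟨0, hn0⟩ : Fin n) := rfl
    set i₀ : Fin n := ⟨0, hn0⟩ with hi₀
    set g : (Fin n →₀ ℕ) → ℝ := fun d => ((d i₀ : ℝ) - 1) *
      ∏ i ∈ Finset.univ.filter (fun i : Fin n => (i : ℕ) < k), ((d i) : ℝ) with hg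
    have hFB : ∀ d ∈ T, ∀ ω ∈ B d,
        ((D i₀ ω : ℝ) - 1) *
          ∏ i ∈ Finset.univ.filter (fun i : Fin n => (i : ℕ) < k), ((D i ω) : ℝ) = g d := by
      intro d _ ω hω
      simp only [hB, Set.mem_iInter, Set.mem_preimage, Set.mem_singleton_iff] at hω
      rw [hg]
      simp only [hω]
    have hIntB : ∀ d ∈ T, ∫ ω in B d, (((D i₀ ω : ℝ) - 1) *
          ∏ i ∈ Finset.univ.filter (fun i : Fin n => (i : ℕ) < k), ((D i ω) : ℝ)) ∂μ
        = g d * (μ (B d)).toReal := by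
      intro d hd
      rw [setIntegral_congr_fun (hmB d) (fun ω hω => hFB d hd ω hω), setIntegral_const,
        smul_eq_mul, mul_comm]
      rfl
    have hIntOn : ∀ d ∈ T, IntegrableOn (fun ω => ((D i₀ ω : ℝ) - 1) *
          ∏ i ∈ Finset.univ.filter (fun i : Fin n => (i : ℕ) < k), ((D i ω) : ℝ)) (B d) μ := by
      intro d hd
      have hconst : IntegrableOn (fun _ : Ω => g d) (B d) μ :=
        integrableOn_const (measure_ne_top μ _)
      exact hconst.congr_fun (fun ω hω => (hFB d hd ω hω).symm) (hmB d)
    have hIntA : ∫ ω in A, (((D i₀ ω : ℝ) - 1) *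
          ∏ i ∈ Finset.univ.filter (fun i : Fin n => (i : ℕ) < k), ((D i ω) : ℝ)) ∂μ
        = ∑ d ∈ T, g d * (μ (B d)).toReal := by
      rw [hAU, integral_biUnion_finset T (fun d _ => hmB d) hdisj hIntOn]
      exact Finset.sum_congr rfl hIntB
    have hW := sum_weight m n k hm hk hkn
    have hIntA2 : ∫ ω in A, (((D i₀ ω : ℝ) - 1) *
          ∏ i ∈ Finset.univ.filter (fun i : Fin n => (i : ℕ) < k), ((D i ω) : ℝ)) ∂μ
        = ((m : ℝ) ^ k * ((m : ℝ) - 1) * ((n * m - k - 1).choose (n - k - 1) : ℝ))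
            * (p ^ n * q ^ (n * m - n)) := by
      rw [hIntA]
      rw [Finset.sum_congr rfl (fun d hd => by
        rw [hμB d, ENNReal.toReal_ofReal (Finset.prod_nonneg (fun i _ => hPnn (d i))),
          hsumP d hd, ← mul_assoc])]
      rw [← Finset.sum_mul, ← hW]
    have hcond : (μ[|A]) = (μ A)⁻¹ • μ.restrict A := rfl
    have hI : ∫ ω, (((D i₀ ω : ℝ) - 1) *
          ∏ i ∈ Finset.univ.filter (fun i : Fin n => (i : ℕ) < k), ((D i ω) : ℝ)) ∂(μ[|A])
        = (m : ℝ) ^ k * ((m : ℝ) - 1) * ((n * m - k - 1).choose (n - k - 1) : ℝ)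
            / ((n * m).choose n : ℝ) := by
      rw [hcond, integral_smul_measure, hIntA2, hμA, ENNReal.toReal_inv,
        ENNReal.toReal_ofReal hRpos.le, smul_eq_mul]
      have hpn : (0 : ℝ) < p ^ n * q ^ (n * m - n) := by positivity
      field_simp
    rw [i₀eq] at *
    rw [hI]
    ring
  · -- part 2
    have hE : {ω | ∀ i, D i ω = 1} = B (Finsupp.equivFunOnFinite.symm (fun _ => 1)) := by
      ext ω
      simp [hB]
    have hsub : A ∩ {ω | ∀ i, D i ω = 1} = {ω | ∀ i, D i ω = 1} := by
      apply Set.inter_eq_self_of_subset_right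
      intro ω hω
      simp only [Set.mem_setOf_eq] at hω
      simp only [hA, Set.mem_setOf_eq]
      simp [hω, Finset.card_univ]
    rw [cond_apply hmA, hsub, hE, hμB]
    have hprod1 : (∏ i : Fin n,
        P ((Finsupp.equivFunOnFinite.symm (fun _ => (1 : ℕ)) : Fin n →₀ ℕ) i)) = P 1 ^ n := by
      simp [Finset.prod_const, Finset.card_univ]
    rw [hprod1, hμA]
    have hP1 : P 1 = (m : ℝ) * p * q ^ (m - 1) := by
      rw [hP]; simp [Nat.choose_one_right]
    have hexp : n * (m - 1) = n * m - n := by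
      have h1 : n * ((m - 1) + 1) = n * (m - 1) + n := by rw [Nat.mul_add, Nat.mul_one]
      rw [show (m - 1) + 1 = m from by omega] at h1
      generalize hM : n * m = M at h1 ⊢
      generalize hU : n * (m - 1) = U at h1 ⊢
      omega
    have hS : ((m : ℝ) * p * q ^ (m - 1)) ^ n = (m : ℝ) ^ n * p ^ n * q ^ (n * m - n) := by
      rw [mul_pow, mul_pow, ← pow_mul, Nat.mul_comm (m - 1) n, hexp]
    rw [hP1, hS, ENNReal.toReal_mul, ENNReal.toReal_inv, ENNReal.toReal_ofReal hRpos.le,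
      ENNReal.toReal_ofReal (by positivity)]
    have hpn : (0 : ℝ) < p ^ n * q ^ (n * m - n) := by positivity
    field_simp
end

section
/- For fixed 0 < x < 1 and ℓ = ⌊xn⌋, the quantity C(n,ℓ)·Γ(ℓ(1+ρ))Γ((n-ℓ)(1+ρ))Γ(nρ)/(Γ(ℓρ)Γ((n-ℓ)ρ)Γ(n(1+ρ))) is asymptotic to √(ρ/(1+ρ))·√(n/(2πℓ(n-ℓ))) as n → ∞. -/
open Filter

noncomputable def stAux (y : ℝ) : ℝ :=
  Real.exp ((y - 1/2) * Real.log y - y + Real.log (2 * Real.pi) / 2)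

lemma stAux_pos (y : ℝ) : 0 < stAux y := Real.exp_pos _

noncomputable def GAux (y : ℝ) : ℝ :=
  Real.log (Real.Gamma y) - ((y - 1/2) * Real.log y - y)

lemma GAux_nat_tendsto :
    Tendsto (fun k : ℕ => GAux k) atTop (nhds (Real.log (2 * Real.pi) / 2)) := by
  have hπ : 0 < Real.pi := Real.pi_pos
  have h1 : Tendsto (fun k : ℕ => Real.log (Stirling.stirlingSeq (k+1)) + Real.log 2 / 2) atTop
      (nhds (Real.log (2*Real.pi)/2)) := by
    have h0 := (Real.continuousAt_log (x := Real.sqrt Real.pi)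
      (by positivity)).tendsto.comp
      (Stirling.tendsto_stirlingSeq_sqrt_pi.comp (tendsto_add_atTop_nat 1))
    have h2 := h0.add_const (Real.log 2 / 2)
    convert h2 using 2
    · rfl
    rw [Real.log_sqrt hπ.le, Real.log_mul two_ne_zero hπ.ne']
    ring
  rw [← Filter.tendsto_add_atTop_iff_nat 1]
  refine h1.congr fun m => ?_
  have hm1 : (0:ℝ) < (m:ℝ) + 1 := by positivity
  have hfacm : (0:ℝ) < (m.factorial : ℝ) := by exact_mod_cast m.factorial_pos
  have hfac : (0:ℝ) < ((m+1).factorial : ℝ) := by exact_mod_cast (m+1).factorial_pos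
  have hlogfac : Real.log ((m+1).factorial : ℝ)
      = Real.log ((m:ℝ)+1) + Real.log (m.factorial : ℝ) := by
    rw [Nat.factorial_succ]
    push_cast
    rw [Real.log_mul (by positivity) hfacm.ne']
  rw [GAux, Stirling.stirlingSeq]
  push_cast
  rw [Real.Gamma_nat_eq_factorial m,
    Real.log_div hfac.ne' (by positivity),
    Real.log_mul (by positivity) (by positivity),
    Real.log_sqrt (by positivity),
    Real.log_pow,
    Real.log_div hm1.ne' (Real.exp_ne_zero 1),
    Real.log_exp,
    Real.log_mul two_ne_zero hm1.ne', hlogfac]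
  push_cast
  ring

lemma GAux_floor_bound (y : ℝ) (hy : 2 ≤ y) :
    GAux (⌊y⌋₊ : ℝ) - 2 / y ≤ GAux y ∧ GAux y ≤ GAux (⌊y⌋₊ : ℝ) + 2 / y := by
  have hy0 : (0:ℝ) < y := by linarith
  set n : ℕ := ⌊y⌋₊ with hn
  have hn2 : 2 ≤ n := Nat.le_floor (by exact_mod_cast hy)
  have hnr : (2:ℝ) ≤ (n:ℝ) := by exact_mod_cast hn2
  have hn0 : (0:ℝ) < (n:ℝ) := by linarith
  have hny : (n:ℝ) ≤ y := Nat.floor_le hy0.le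
  have hyn : y < (n:ℝ) + 1 := Nat.lt_floor_add_one y
  have hΓn : 0 < Real.Gamma (n:ℝ) := Real.Gamma_pos_of_pos hn0
  have hΓy : 0 < Real.Gamma y := Real.Gamma_pos_of_pos hy0
  -- log Gamma recurrences
  have hrecn : Real.log (Real.Gamma ((n:ℝ) + 1))
      = Real.log (n:ℝ) + Real.log (Real.Gamma (n:ℝ)) := by
    rw [Real.Gamma_add_one hn0.ne', Real.log_mul hn0.ne' hΓn.ne']
  have hrecy : Real.log (Real.Gamma (y + 1))
      = Real.log y + Real.log (Real.Gamma y) := by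
    rw [Real.Gamma_add_one hy0.ne', Real.log_mul hy0.ne' hΓy.ne']
  -- convexity 1 : log Γ y ≤ log Γ n + (y - n) log n
  have hcv1 : Real.log (Real.Gamma y)
      ≤ Real.log (Real.Gamma (n:ℝ)) + (y - (n:ℝ)) * Real.log (n:ℝ) := by
    have h := Real.convexOn_log_Gamma.2 (Set.mem_Ioi.2 hn0)
      (Set.mem_Ioi.2 (by linarith : (0:ℝ) < (n:ℝ) + 1))
      (by linarith : (0:ℝ) ≤ 1 - (y - (n:ℝ))) (by linarith : (0:ℝ) ≤ y - (n:ℝ))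
      (by ring)
    simp only [Function.comp_apply, smul_eq_mul] at h
    rw [show (1 - (y - (n:ℝ))) * (n:ℝ) + (y - (n:ℝ)) * ((n:ℝ) + 1) = y by ring,
      hrecn] at h
    nlinarith [h]
  -- convexity 2 : log Γ n + log n ≤ log Γ y + (1 - (y - n)) * log y
  have hcv2 : Real.log (Real.Gamma (n:ℝ)) + Real.log (n:ℝ)
      ≤ Real.log (Real.Gamma y) + (1 - (y - (n:ℝ))) * Real.log y := by
    have h := Real.convexOn_log_Gamma.2 (Set.mem_Ioi.2 hy0)
      (Set.mem_Ioi.2 (by linarith : (0:ℝ) < y + 1))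
      (by linarith : (0:ℝ) ≤ y - (n:ℝ)) (by linarith : (0:ℝ) ≤ 1 - (y - (n:ℝ)))
      (by ring)
    simp only [Function.comp_apply, smul_eq_mul] at h
    rw [show (y - (n:ℝ)) * y + (1 - (y - (n:ℝ))) * (y + 1) = (n:ℝ) + 1 by ring,
      hrecn, hrecy] at h
    nlinarith [h]
  -- log inequalities
  have hyD : y * (Real.log (n:ℝ) - Real.log y) ≤ (n:ℝ) - y := by
    have h := Real.log_le_sub_one_of_pos (show (0:ℝ) < (n:ℝ)/y by positivity)
    rw [Real.log_div hn0.ne' hy0.ne'] at h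
    have h2 := mul_le_mul_of_nonneg_left h hy0.le
    have h3 : y * ((n:ℝ)/y - 1) = (n:ℝ) - y := by field_simp
    linarith
  have hnD : (n:ℝ) * (Real.log y - Real.log (n:ℝ)) ≤ y - (n:ℝ) := by
    have h := Real.log_le_sub_one_of_pos (show (0:ℝ) < y/(n:ℝ) by positivity)
    rw [Real.log_div hy0.ne' hn0.ne'] at h
    have h2 := mul_le_mul_of_nonneg_left h hn0.le
    have h3 : (n:ℝ) * (y/(n:ℝ) - 1) = y - (n:ℝ) := by field_simp
    linarith
  constructor
  · -- lower bound
    have hB' : ((n:ℝ) + 1/2) * (Real.log (n:ℝ) - Real.log y) + (y - (n:ℝ))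
        ≤ GAux y - GAux (n:ℝ) := by
      unfold GAux; nlinarith [hcv2]
    have key : -(1:ℝ) ≤ (2*(n:ℝ)) * (((n:ℝ)+1/2) * (Real.log (n:ℝ) - Real.log y) + (y - (n:ℝ))) := by
      nlinarith [mul_le_mul_of_nonneg_left hnD (show (0:ℝ) ≤ 2*(n:ℝ)+1 by positivity)]
    have h1 : -(2/y) ≤ -(1/(2*(n:ℝ))) := by
      rw [neg_le_neg_iff, div_le_div_iff₀ (by positivity) hy0]
      nlinarith
    have h2 : -(1/(2*(n:ℝ)))
        ≤ ((n:ℝ)+1/2) * (Real.log (n:ℝ) - Real.log y) + (y - (n:ℝ)) := by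
      rw [neg_le, le_div_iff₀ (show (0:ℝ) < 2*(n:ℝ) by positivity)]
      nlinarith [key]
    linarith
  · -- upper bound
    have hB : GAux y - GAux (n:ℝ)
        ≤ (y - 1/2) * (Real.log (n:ℝ) - Real.log y) + (y - (n:ℝ)) := by
      unfold GAux; nlinarith [hcv1]
    have hC : (y - 1/2) * (Real.log (n:ℝ) - Real.log y) + (y - (n:ℝ)) ≤ 2/y := by
      rw [le_div_iff₀ hy0]
      linarith [mul_le_mul_of_nonneg_left hyD (show (0:ℝ) ≤ 2*y - 1 by linarith), hyn, hny]
    linarith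

lemma gamma_div_stAux_tendsto :
    Tendsto (fun y : ℝ => Real.Gamma y / stAux y) atTop (nhds 1) := by
  set c := Real.log (2 * Real.pi) / 2 with hc
  have hfloor : Tendsto (fun y : ℝ => GAux (⌊y⌋₊ : ℝ)) atTop (nhds c) :=
    GAux_nat_tendsto.comp tendsto_nat_floor_atTop
  have h2y : Tendsto (fun y : ℝ => 2 / y) atTop (nhds 0) := by
    simpa [div_eq_mul_inv] using tendsto_inv_atTop_zero.const_mul (2:ℝ)
  have hG : Tendsto GAux atTop (nhds c) := by
    refine tendsto_of_tendsto_of_tendsto_of_le_of_le' (g := fun y => GAux (⌊y⌋₊ : ℝ) - 2/y)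
      (h := fun y => GAux (⌊y⌋₊ : ℝ) + 2/y) ?_ ?_ ?_ ?_
    · simpa using hfloor.sub h2y
    · simpa using hfloor.add h2y
    · filter_upwards [eventually_ge_atTop (2:ℝ)] with y hy
      exact (GAux_floor_bound y hy).1
    · filter_upwards [eventually_ge_atTop (2:ℝ)] with y hy
      exact (GAux_floor_bound y hy).2
  have hexp : Tendsto (fun y : ℝ => Real.exp (GAux y - c)) atTop (nhds 1) := by
    have h0 : Tendsto (fun y : ℝ => GAux y - c) atTop (nhds 0) := by
      simpa using hG.sub_const c
    simpa [Function.comp_def] using (Real.continuous_exp.tendsto 0).comp h0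
  refine hexp.congr' ?_
  filter_upwards [eventually_gt_atTop (0:ℝ)] with y hy
  rw [show GAux y - c = Real.log (Real.Gamma y) - ((y - 1/2) * Real.log y - y + c) by
      rw [GAux]; ring,
    Real.exp_sub, Real.exp_log (Real.Gamma_pos_of_pos hy), stAux]

lemma stAux_identity (a b p : ℝ) (ha : 0 < a) (hb : 0 < b) (hp : 0 < p) :
    (a + b) * stAux (a + b) * stAux (a * (1 + p)) * stAux (b * (1 + p)) *
        stAux ((a + b) * p) /
      (a * b * stAux a * stAux b * stAux (a * p) * stAux (b * p) *
        stAux ((a + b) * (1 + p)))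
    = Real.sqrt (p / (1 + p)) * Real.sqrt ((a + b) / (2 * Real.pi * a * b)) := by
  have hπ : (0:ℝ) < Real.pi := Real.pi_pos
  have hab : (0:ℝ) < a + b := by linarith
  have hp1 : (0:ℝ) < 1 + p := by linarith
  have h2π : (0:ℝ) < 2 * Real.pi := by linarith
  have S1 := stAux_pos (a + b)
  have S2 := stAux_pos (a * (1 + p))
  have S3 := stAux_pos (b * (1 + p))
  have S4 := stAux_pos ((a + b) * p)
  have S5 := stAux_pos a
  have S6 := stAux_pos b
  have S7 := stAux_pos (a * p)
  have S8 := stAux_pos (b * p)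
  have S9 := stAux_pos ((a + b) * (1 + p))
  have hnum : (0:ℝ) < (a + b) * stAux (a + b) * stAux (a * (1 + p)) * stAux (b * (1 + p)) *
      stAux ((a + b) * p) := by
    exact mul_pos (mul_pos (mul_pos (mul_pos hab S1) S2) S3) S4
  have hden : (0:ℝ) < a * b * stAux a * stAux b * stAux (a * p) * stAux (b * p) *
      stAux ((a + b) * (1 + p)) := by
    exact mul_pos (mul_pos (mul_pos (mul_pos (mul_pos (mul_pos ha hb) S5) S6) S7) S8) S9
  have hsq1 : (0:ℝ) < Real.sqrt (p / (1 + p)) := Real.sqrt_pos.2 (by positivity)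
  have hsq2 : (0:ℝ) < Real.sqrt ((a + b) / (2 * Real.pi * a * b)) :=
    Real.sqrt_pos.2 (by positivity)
  apply Real.log_injOn_pos (Set.mem_Ioi.2 (div_pos hnum hden))
    (Set.mem_Ioi.2 (mul_pos hsq1 hsq2))
  rw [Real.log_div hnum.ne' hden.ne',
    Real.log_mul (by positivity) S4.ne',
    Real.log_mul (by positivity) S3.ne',
    Real.log_mul (by positivity) S2.ne',
    Real.log_mul (by positivity) S1.ne',
    Real.log_mul (by positivity) S9.ne',
    Real.log_mul (by positivity) S8.ne',
    Real.log_mul (by positivity) S7.ne',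
    Real.log_mul (by positivity) S6.ne',
    Real.log_mul (by positivity) S5.ne',
    Real.log_mul ha.ne' hb.ne',
    Real.log_mul hsq1.ne' hsq2.ne',
    Real.log_sqrt (by positivity),
    Real.log_sqrt (by positivity),
    Real.log_div hp.ne' hp1.ne',
    Real.log_div hab.ne' (by positivity),
    Real.log_mul (by positivity : (2 * Real.pi * a : ℝ) ≠ 0) hb.ne',
    Real.log_mul h2π.ne' ha.ne']
  simp only [stAux, Real.log_exp]
  rw [Real.log_mul ha.ne' hp1.ne',
    Real.log_mul hb.ne' hp1.ne',
    Real.log_mul hab.ne' hp.ne',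
    Real.log_mul ha.ne' hp.ne',
    Real.log_mul hb.ne' hp.ne',
    Real.log_mul hab.ne' hp1.ne']
  ring

lemma cast_factorial_eq (k : ℕ) (hk : 1 ≤ k) :
    (k.factorial : ℝ) = (k : ℝ) * Real.Gamma (k : ℝ) := by
  obtain ⟨m, rfl⟩ := Nat.exists_eq_add_of_le hk
  rw [Nat.add_comm 1 m, Nat.factorial_succ]
  push_cast
  rw [Real.Gamma_nat_eq_factorial]

/-- For fixed `ρ > 0` and `0 < x < 1`, with `ℓ = ⌊xn⌋`, the quantity
`C(n,ℓ) Γ(ℓ(1+ρ)) Γ((n-ℓ)(1+ρ)) Γ(nρ) / (Γ(ℓρ) Γ((n-ℓ)ρ) Γ(n(1+ρ)))` is asymptotic to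
`√(ρ/(1+ρ)) √(n/(2πℓ(n-ℓ)))` as `n → ∞`. -/
theorem stmt19 (ρ : ℝ) (hρ : 0 < ρ) (x : ℝ) (hx1 : 0 < x) (hx2 : x < 1) :
    Tendsto (fun n : ℕ =>
        ((fun l : ℕ =>
          ((n.choose l : ℝ) * Real.Gamma ((l : ℝ) * (1 + ρ)) *
              Real.Gamma (((n : ℝ) - l) * (1 + ρ)) * Real.Gamma ((n : ℝ) * ρ) /
            (Real.Gamma ((l : ℝ) * ρ) * Real.Gamma (((n : ℝ) - l) * ρ) *
              Real.Gamma ((n : ℝ) * (1 + ρ)))) /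
          (Real.sqrt (ρ / (1 + ρ)) *
            Real.sqrt ((n : ℝ) / (2 * Real.pi * l * ((n : ℝ) - l)))))) ⌊x * n⌋₊)
      atTop (nhds 1) := by
  have hπ : (0:ℝ) < Real.pi := Real.pi_pos
  have h1ρ : (0:ℝ) < 1 + ρ := by linarith
  -- limits to infinity
  have hnat : Tendsto (fun n : ℕ => (n:ℝ)) atTop atTop := tendsto_natCast_atTop_atTop
  have hxn : Tendsto (fun n : ℕ => x * (n:ℝ)) atTop atTop := hnat.const_mul_atTop hx1
  have hl : Tendsto (fun n : ℕ => ⌊x * (n:ℝ)⌋₊) atTop atTop :=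
    tendsto_nat_floor_atTop.comp hxn
  have hA : Tendsto (fun n : ℕ => ((⌊x * (n:ℝ)⌋₊ : ℕ) : ℝ)) atTop atTop :=
    tendsto_natCast_atTop_atTop.comp hl
  have hB : Tendsto (fun n : ℕ => (n:ℝ) - ((⌊x * (n:ℝ)⌋₊ : ℕ) : ℝ)) atTop atTop := by
    refine tendsto_atTop_mono (fun n => ?_) (hnat.const_mul_atTop (by linarith : (0:ℝ) < 1 - x))
    have := Nat.floor_le (by positivity : (0:ℝ) ≤ x * (n:ℝ))
    nlinarith
  have hAρ := hA.atTop_mul_const hρ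
  have hA1ρ := hA.atTop_mul_const h1ρ
  have hBρ := hB.atTop_mul_const hρ
  have hB1ρ := hB.atTop_mul_const h1ρ
  have hnρ := hnat.atTop_mul_const hρ
  have hn1ρ := hnat.atTop_mul_const h1ρ
  have M := gamma_div_stAux_tendsto
  -- the product of nine ratio limits
  have T : Tendsto (fun n : ℕ =>
      ((Real.Gamma ((n:ℝ)) / stAux ((n:ℝ))) *
        (Real.Gamma (((⌊x * (n:ℝ)⌋₊ : ℕ) : ℝ) * (1 + ρ)) / stAux (((⌊x * (n:ℝ)⌋₊ : ℕ) : ℝ) * (1 + ρ))) *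
        (Real.Gamma (((n:ℝ) - ((⌊x * (n:ℝ)⌋₊ : ℕ) : ℝ)) * (1 + ρ)) / stAux (((n:ℝ) - ((⌊x * (n:ℝ)⌋₊ : ℕ) : ℝ)) * (1 + ρ))) *
        (Real.Gamma ((n:ℝ) * ρ) / stAux ((n:ℝ) * ρ))) /
      ((Real.Gamma (((⌊x * (n:ℝ)⌋₊ : ℕ) : ℝ)) / stAux (((⌊x * (n:ℝ)⌋₊ : ℕ) : ℝ))) *
        (Real.Gamma ((n:ℝ) - ((⌊x * (n:ℝ)⌋₊ : ℕ) : ℝ)) / stAux ((n:ℝ) - ((⌊x * (n:ℝ)⌋₊ : ℕ) : ℝ))) *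
        (Real.Gamma (((⌊x * (n:ℝ)⌋₊ : ℕ) : ℝ) * ρ) / stAux (((⌊x * (n:ℝ)⌋₊ : ℕ) : ℝ) * ρ)) *
        (Real.Gamma (((n:ℝ) - ((⌊x * (n:ℝ)⌋₊ : ℕ) : ℝ)) * ρ) / stAux (((n:ℝ) - ((⌊x * (n:ℝ)⌋₊ : ℕ) : ℝ)) * ρ)) *
        (Real.Gamma ((n:ℝ) * (1 + ρ)) / stAux ((n:ℝ) * (1 + ρ))))) atTop (nhds 1) := by
    have T1 := (((M.comp hnat).mul (M.comp hA1ρ)).mul (M.comp hB1ρ)).mul (M.comp hnρ)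
    have T2 := ((((M.comp hA).mul (M.comp hB)).mul (M.comp hAρ)).mul (M.comp hBρ)).mul (M.comp hn1ρ)
    have T3 := T1.div T2 (by norm_num)
    norm_num at T3
    exact T3
  refine T.congr' ?_
  filter_upwards [hl.eventually_ge_atTop 1, hB.eventually_ge_atTop 1,
    eventually_ge_atTop 1] with n h1 h2 hn1
  set l : ℕ := ⌊x * (n:ℝ)⌋₊ with hldef
  have hA1 : (1:ℝ) ≤ (l:ℝ) := by exact_mod_cast h1
  have hA0 : (0:ℝ) < (l:ℝ) := by linarith
  have hB0 : (0:ℝ) < (n:ℝ) - (l:ℝ) := by linarith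
  have hlnR : (l:ℝ) < (n:ℝ) := by linarith
  have hln : l < n := by exact_mod_cast hlnR
  have hn0 : (0:ℝ) < (n:ℝ) := by linarith
  have hid := stAux_identity (l:ℝ) ((n:ℝ) - (l:ℝ)) ρ hA0 hB0 hρ
  rw [show (l:ℝ) + ((n:ℝ) - (l:ℝ)) = (n:ℝ) by ring] at hid
  have hsub : ((n - l : ℕ) : ℝ) = (n:ℝ) - (l:ℝ) := by
    push_cast [Nat.cast_sub hln.le]; ring
  have e1 : ((n.choose l : ℕ) : ℝ)
      = ((n:ℝ) * Real.Gamma (n:ℝ)) / (((l:ℝ) * Real.Gamma (l:ℝ)) *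
        (((n:ℝ) - (l:ℝ)) * Real.Gamma ((n:ℝ) - (l:ℝ)))) := by
    rw [Nat.cast_choose ℝ hln.le, cast_factorial_eq n (by omega),
      cast_factorial_eq l (by omega), cast_factorial_eq (n - l) (by omega), hsub]
  have g1 := (Real.Gamma_pos_of_pos hn0).ne'
  have g2 := (Real.Gamma_pos_of_pos hA0).ne'
  have g3 := (Real.Gamma_pos_of_pos hB0).ne'
  have g4 := (Real.Gamma_pos_of_pos (by positivity : (0:ℝ) < (n:ℝ) * ρ)).ne'
  have g5 := (Real.Gamma_pos_of_pos (by positivity : (0:ℝ) < (n:ℝ) * (1 + ρ))).ne'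
  have g6 := (Real.Gamma_pos_of_pos (by positivity : (0:ℝ) < (l:ℝ) * ρ)).ne'
  have g7 := (Real.Gamma_pos_of_pos (by positivity : (0:ℝ) < (l:ℝ) * (1 + ρ))).ne'
  have g8 := (Real.Gamma_pos_of_pos (by positivity : (0:ℝ) < ((n:ℝ) - (l:ℝ)) * ρ)).ne'
  have g9 := (Real.Gamma_pos_of_pos (by positivity : (0:ℝ) < ((n:ℝ) - (l:ℝ)) * (1 + ρ))).ne'
  have s1 := (stAux_pos ((n:ℝ))).ne'
  have s2 := (stAux_pos ((l:ℝ))).ne'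
  have s3 := (stAux_pos ((n:ℝ) - (l:ℝ))).ne'
  have s4 := (stAux_pos ((n:ℝ) * ρ)).ne'
  have s5 := (stAux_pos ((n:ℝ) * (1 + ρ))).ne'
  have s6 := (stAux_pos ((l:ℝ) * ρ)).ne'
  have s7 := (stAux_pos ((l:ℝ) * (1 + ρ))).ne'
  have s8 := (stAux_pos (((n:ℝ) - (l:ℝ)) * ρ)).ne'
  have s9 := (stAux_pos (((n:ℝ) - (l:ℝ)) * (1 + ρ))).ne'
  rw [e1, ← hid]
  field_simp
end
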